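/- arXiv:2306.03638 — 4 statements merged into one kernel-verified Lean document; each statement's English description precedes it below -/
import Mathlib

section
/- Let H be a real finite-dimensional inner product space, let l : H → ℝ be μ-strongly convex and M-smooth with minimizer w̄, and let h : H → ℝ ∪ {+∞} be proper, closed and convex, with w* the minimizer of l + h. Let (w^t) be generated by Prox-SGD with constant stepsize γ ∈ (0, min{μ/(2a), 1/μ}], where conditionally on w^t the estimator g^t is a quadratically bounded estimator for ∇l at w^t with parameters (a, b, w*). Then for every T ≥ 0, E‖w^{T+1} − w*‖² ≤ (1 − γμ)^T ‖w⁰ − w*‖² + (2γ/μ)(b + M²‖w* − w̄‖²). -/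
open MeasureTheory

open MeasureTheory Filter Topology Set

section Helpers

variable {H : Type*} [NormedAddCommGroup H] [InnerProductSpace ℝ H] [CompleteSpace H]

local notation "⟪" x ", " y "⟫" => @inner ℝ _ _ x y

private lemma aux_le_of_forall_Ioc (Aa Bb c : ℝ) (hc : 0 ≤ c)
    (hyp : ∀ s ∈ Ioc (0:ℝ) 1, Aa ≤ Bb + s * c) : Aa ≤ Bb := by
  by_contra hcon
  push_neg at hcon
  set ε := Aa - Bb with hε
  have hε0 : 0 < ε := by linarith
  have hs0 : 0 < min 1 (ε / (2 * (c + 1))) := by positivity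
  have h1 := hyp (min 1 (ε / (2 * (c + 1)))) ⟨hs0, min_le_left _ _⟩
  have h2 : min 1 (ε / (2 * (c + 1))) * c ≤ ε / 2 := by
    calc min 1 (ε / (2 * (c + 1))) * c ≤ ε / (2 * (c + 1)) * c :=
      mul_le_mul_of_nonneg_right (min_le_right _ _) hc
    _ ≤ ε / 2 := by
      rw [div_mul_eq_mul_div, div_le_div_iff₀ (by positivity) (by norm_num)]
      nlinarith
  linarith

private lemma aux_slope_tendsto (f : H → ℝ) (f' x d : H) (hf : HasGradientAt f f' x) :
    Tendsto (fun s : ℝ => (f (x + s • d) - f x) / s) (𝓝[>] (0:ℝ)) (𝓝 ⟪f', d⟫) := by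
  have hc : HasDerivAt (fun s : ℝ => x + s • d) d 0 := by
    simpa using ((hasDerivAt_id (0:ℝ)).smul_const d).const_add x
  have hφ : HasDerivAt (fun s : ℝ => f (x + s • d)) ⟪f', d⟫ 0 := by
    have hx : HasFDerivAt f ((InnerProductSpace.toDual ℝ H) f') (x + (0:ℝ) • d) := by
      simpa using hf.hasFDerivAt
    have := hx.comp_hasDerivAt (0:ℝ) hc
    simp [InnerProductSpace.toDual] at this
    exact this
  have h1 := hasDerivAt_iff_tendsto_slope.mp hφ
  have h2 : Tendsto (slope (fun s : ℝ => f (x + s • d)) 0) (𝓝[>] (0:ℝ)) (𝓝 ⟪f', d⟫) :=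
    h1.mono_left (nhdsWithin_mono _ (by intro s hs; exact ne_of_gt hs))
  refine h2.congr' ?_
  filter_upwards [self_mem_nhdsWithin] with s hs
  simp [slope_def_field, slope, zero_smul, div_eq_inv_mul]

private lemma aux_le_inner_of_slope (f : H → ℝ) (f' x d : H) (hf : HasGradientAt f f' x) (c : ℝ)
    (hc : ∀ s : ℝ, s ∈ Ioc (0:ℝ) 1 → c * s ≤ f (x + s • d) - f x) : c ≤ ⟪f', d⟫ := by
  refine ge_of_tendsto (aux_slope_tendsto f f' x d hf) ?_
  filter_upwards [Ioc_mem_nhdsGT_of_mem (by constructor <;> norm_num : (0:ℝ) ∈ Ico (0:ℝ) 1)]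
    with s hs
  rw [le_div_iff₀ hs.1]
  exact hc s hs

private lemma aux_inner_le_of_slope (f : H → ℝ) (f' x d : H) (hf : HasGradientAt f f' x) (c : ℝ)
    (hc : ∀ s : ℝ, s ∈ Ioc (0:ℝ) 1 → f (x + s • d) - f x ≤ c * s) : ⟪f', d⟫ ≤ c := by
  refine le_of_tendsto (aux_slope_tendsto f f' x d hf) ?_
  filter_upwards [Ioc_mem_nhdsGT_of_mem (by constructor <;> norm_num : (0:ℝ) ∈ Ico (0:ℝ) 1)]
    with s hs
  rw [div_le_iff₀ hs.1]
  exact hc s hs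

/-- gradient inequality for a convex function -/
private lemma aux_convex_grad_ineq (f : H → ℝ) (hconv : ConvexOn ℝ Set.univ f)
    (f' x y : H) (hf : HasGradientAt f f' x) : ⟪f', y - x⟫ ≤ f y - f x := by
  refine aux_inner_le_of_slope f f' x (y - x) hf _ (fun s hs => ?_)
  have h := hconv.2 (mem_univ y) (mem_univ x) (le_of_lt hs.1) (by linarith [hs.2] : (0:ℝ) ≤ 1 - s)
    (by ring)
  have he : x + s • (y - x) = s • y + (1 - s) • x := by
    simp [smul_sub, sub_smul]; abel
  rw [he]
  simp only [smul_eq_mul] at h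
  have : s * f y + (1 - s) * f x - f x = (f y - f x) * s := by ring
  linarith

private lemma aux_hasGradientAt_half_norm_sq (μ : ℝ) (x : H) :
    HasGradientAt (fun y : H => μ / 2 * ‖y‖ ^ 2) (μ • x) x := by
  have h1 : HasFDerivAt (fun y : H => ⟪y, y⟫)
      ((fderivInnerCLM ℝ (x, x)).comp ((ContinuousLinearMap.id ℝ H).prod
        (ContinuousLinearMap.id ℝ H))) x :=
    (hasFDerivAt_id x).inner ℝ (hasFDerivAt_id x)
  have h2 : HasFDerivAt (fun y : H => μ / 2 * ⟪y, y⟫)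
      ((μ / 2) • ((fderivInnerCLM ℝ (x, x)).comp ((ContinuousLinearMap.id ℝ H).prod
        (ContinuousLinearMap.id ℝ H)))) x := h1.const_smul (μ / 2) |>.congr_fderiv (by
          ext v; simp [smul_eq_mul])
  have heq : ((μ / 2) • ((fderivInnerCLM ℝ (x, x)).comp ((ContinuousLinearMap.id ℝ H).prod
      (ContinuousLinearMap.id ℝ H)))) = (InnerProductSpace.toDual ℝ H) (μ • x) := by
    ext v
    simp [fderivInnerCLM, real_inner_smul_left, smul_eq_mul]
    rw [real_inner_comm]
    ring
  have h3 : HasFDerivAt (fun y : H => μ / 2 * ‖y‖ ^ 2)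
      ((InnerProductSpace.toDual ℝ H) (μ • x)) x := by
    rw [← heq]
    refine h2.congr_of_eventuallyEq ?_
    filter_upwards with y
    rw [real_inner_self_eq_norm_sq]
  simpa using h3.hasGradientAt

private lemma aux_grad_strong_mono (l : H → ℝ) (l' : H → H) (μ : ℝ)
    (hgrad : ∀ x, HasGradientAt l (l' x) x)
    (hstrong : ConvexOn ℝ Set.univ (fun x => l x - μ / 2 * ‖x‖ ^ 2)) (x y : H) :
    μ * ‖x - y‖ ^ 2 ≤ ⟪l' x - l' y, x - y⟫ := by
  have hg : ∀ z : H, HasGradientAt (fun v => l v - μ / 2 * ‖v‖ ^ 2) (l' z - μ • z) z := by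
    intro z
    have := (hgrad z).hasFDerivAt.sub (aux_hasGradientAt_half_norm_sq μ z).hasFDerivAt
    rw [← map_sub] at this
    simpa [Pi.sub_def] using this.hasGradientAt
  have h1 := aux_convex_grad_ineq _ hstrong _ x y (hg x)
  have h2 := aux_convex_grad_ineq _ hstrong _ y x (hg y)
  have hn : ‖x - y‖ ^ 2 = ⟪x, x⟫ - 2 * ⟪x, y⟫ + ⟪y, y⟫ := by
    rw [← real_inner_self_eq_norm_sq]
    simp only [inner_sub_left, inner_sub_right]
    rw [real_inner_comm x y]; ring
  have hnx : ‖x‖ ^ 2 = ⟪x, x⟫ := (real_inner_self_eq_norm_sq x).symm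
  have hny : ‖y‖ ^ 2 = ⟪y, y⟫ := (real_inner_self_eq_norm_sq y).symm
  simp only [inner_sub_left, inner_sub_right, real_inner_smul_left] at h1 h2 ⊢
  rw [real_inner_comm x y] at h2
  rw [hnx, hny] at h1 h2
  rw [hn]
  linarith

/-- the key deterministic inequality for one step of prox-SGD -/
private lemma aux_prox_key (h : H → EReal) (l : H → ℝ) (G wstar : H) (γ : ℝ) (hγ0 : 0 < γ)
    (hconvex : ∀ x y : H, ∀ t : ℝ, 0 ≤ t → t ≤ 1 →
      h (t • x + (1 - t) • y) ≤ (t : EReal) * h x + ((1 - t : ℝ) : EReal) * h y)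
    (hnobot : ∀ v, h v ≠ ⊥) (v0 : H) (hv0 : h v0 ≠ ⊤)
    (hmin : ∀ v, (l wstar : EReal) + h wstar ≤ (l v : EReal) + h v)
    (hgradstar : HasGradientAt l G wstar)
    (u wplus : H)
    (hpro : ∀ v : H, h wplus + ((‖u - wplus‖ ^ 2 / (2 * γ) : ℝ) : EReal)
      ≤ h v + ((‖u - v‖ ^ 2 / (2 * γ) : ℝ) : EReal)) :
    ‖wplus - wstar‖ ^ 2 ≤ ‖u + γ • G - wstar‖ ^ 2 := by
  obtain ⟨R0, hR0⟩ : ∃ r : ℝ, h v0 = (r : EReal) :=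
    ⟨(h v0).toReal, (EReal.coe_toReal hv0 (hnobot v0)).symm⟩
  have hAt : h wstar ≠ ⊤ := by
    intro htop
    have := hmin v0
    rw [htop, hR0] at this
    rw [show ((l wstar : EReal) + ⊤ : EReal) = ⊤ by simp] at this
    rw [show ((l v0 : EReal) + (R0 : EReal)) = ((l v0 + R0 : ℝ) : EReal) by push_cast; ring] at this
    exact (EReal.coe_ne_top _) (top_le_iff.mp this)
  obtain ⟨A, hA⟩ : ∃ r : ℝ, h wstar = (r : EReal) :=
    ⟨(h wstar).toReal, (EReal.coe_toReal hAt (hnobot wstar)).symm⟩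
  have hBt : h wplus ≠ ⊤ := by
    intro htop
    have := hpro v0
    rw [htop, hR0] at this
    rw [show ((⊤ : EReal) + ((‖u - wplus‖ ^ 2 / (2 * γ) : ℝ) : EReal)) = ⊤ by simp] at this
    rw [show ((R0 : EReal) + ((‖u - v0‖ ^ 2 / (2 * γ) : ℝ) : EReal))
      = ((R0 + ‖u - v0‖ ^ 2 / (2 * γ) : ℝ) : EReal) by push_cast; ring] at this
    exact (EReal.coe_ne_top _) (top_le_iff.mp this)
  obtain ⟨B, hB⟩ : ∃ r : ℝ, h wplus = (r : EReal) :=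
    ⟨(h wplus).toReal, (EReal.coe_toReal hBt (hnobot wplus)).symm⟩
  set n : ℝ := ‖wstar - wplus‖ ^ 2 with hn
  have key_c : ⟪u - wplus, wstar - wplus⟫ ≤ γ * (A - B) := by
    refine aux_le_of_forall_Ioc _ _ (n / 2) (by positivity) (fun s hs => ?_)
    set vs : H := s • wstar + (1 - s) • wplus with hvs
    have hcs := hconvex wstar wplus s hs.1.le hs.2
    rw [hA, hB] at hcs
    rw [show ((s : EReal) * (A : EReal) + (((1 - s : ℝ)) : EReal) * (B : EReal))
      = ((s * A + (1 - s) * B : ℝ) : EReal) by push_cast; ring] at hcs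
    have hps := (hpro vs).trans (add_le_add_left hcs _)
    rw [hB] at hps
    rw [show (((s * A + (1 - s) * B : ℝ)) : EReal) + ((‖u - vs‖ ^ 2 / (2 * γ) : ℝ) : EReal)
      = ((s * A + (1 - s) * B + ‖u - vs‖ ^ 2 / (2 * γ) : ℝ) : EReal) by push_cast; ring] at hps
    rw [show ((B : EReal) + ((‖u - wplus‖ ^ 2 / (2 * γ) : ℝ) : EReal))
      = ((B + ‖u - wplus‖ ^ 2 / (2 * γ) : ℝ) : EReal) by push_cast; ring] at hps
    have hreal : B + ‖u - wplus‖ ^ 2 / (2 * γ)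
        ≤ s * A + (1 - s) * B + ‖u - vs‖ ^ 2 / (2 * γ) := by exact_mod_cast hps
    have hvsd : u - vs = (u - wplus) - s • (wstar - wplus) := by
      rw [hvs]; simp only [smul_sub, sub_smul, one_smul]; abel
    have hexp : ‖u - vs‖ ^ 2 = ‖u - wplus‖ ^ 2
        - 2 * (s * ⟪u - wplus, wstar - wplus⟫) + s ^ 2 * n := by
      rw [hvsd, norm_sub_sq_real, real_inner_smul_right, norm_smul, Real.norm_eq_abs,
        mul_pow, sq_abs, hn]
    rw [hexp] at hreal
    have h2γ : (0:ℝ) < 2 * γ := by linarith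
    have h3 : 2 * s * (⟪u - wplus, wstar - wplus⟫ - γ * (A - B) - s * (n / 2)) ≤ 0 := by
      have hreal' := mul_le_mul_of_nonneg_right hreal h2γ.le
      field_simp at hreal'
      nlinarith [hreal']
    have h5 : (2 * s) * (⟪u - wplus, wstar - wplus⟫ - γ * (A - B) - s * (n / 2))
        ≤ (2 * s) * 0 := by linarith
    have h6 := le_of_mul_le_mul_left h5 (by linarith [hs.1] : (0:ℝ) < 2 * s)
    linarith
  have key_d : A - B ≤ ⟪G, wplus - wstar⟫ := by
    refine aux_le_inner_of_slope l G wstar (wplus - wstar) hgradstar _ (fun s hs => ?_)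
    set vs : H := s • wplus + (1 - s) • wstar with hvs
    have hcs := hconvex wplus wstar s hs.1.le hs.2
    rw [hA, hB] at hcs
    rw [show ((s : EReal) * (B : EReal) + (((1 - s : ℝ)) : EReal) * (A : EReal))
      = ((s * B + (1 - s) * A : ℝ) : EReal) by push_cast; ring] at hcs
    have hm := (hmin vs).trans (add_le_add_right hcs _)
    rw [hA] at hm
    rw [show ((l wstar : EReal) + (A : EReal)) = ((l wstar + A : ℝ) : EReal) by push_cast; ring,
      show ((l vs : EReal) + ((s * B + (1 - s) * A : ℝ) : EReal))
        = ((l vs + (s * B + (1 - s) * A) : ℝ) : EReal) by push_cast; ring] at hm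
    have hreal : l wstar + A ≤ l vs + (s * B + (1 - s) * A) := by exact_mod_cast hm
    have hvse : wstar + s • (wplus - wstar) = vs := by
      rw [hvs]; simp only [smul_sub, sub_smul, one_smul]; abel
    rw [hvse]
    linarith
  have key_e : ⟪u - wplus, wstar - wplus⟫ ≤ γ * ⟪G, wplus - wstar⟫ :=
    key_c.trans (mul_le_mul_of_nonneg_left key_d hγ0.le)
  set p : H := u + γ • G with hp
  have hid : ‖wplus - wstar‖ ^ 2 = ⟪wplus - p, wplus - wstar⟫ + ⟪p - wstar, wplus - wstar⟫ := by
    rw [← inner_add_left, sub_add_sub_cancel, real_inner_self_eq_norm_sq]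
  have h6 : ⟪wplus - p, wplus - wstar⟫ ≤ 0 := by
    have hpe : wplus - p = (wplus - u) - γ • G := by rw [hp]; abel
    rw [hpe, inner_sub_left, real_inner_smul_left]
    have h7 : ⟪wplus - u, wplus - wstar⟫ = ⟪u - wplus, wstar - wplus⟫ := by
      rw [← neg_sub u wplus, ← neg_sub wstar wplus, inner_neg_neg]
    rw [h7]
    linarith
  have h8 := real_inner_le_norm (p - wstar) (wplus - wstar)
  nlinarith [hid, h6, h8, norm_nonneg (p - wstar), norm_nonneg (wplus - wstar),
    sq_nonneg (‖p - wstar‖ - ‖wplus - wstar‖)]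

end Helpers

private lemma aux_condexp_clm {Ω : Type*} {m m0 : MeasurableSpace Ω} (hm : m ≤ m0) (P : Measure Ω)
    [IsFiniteMeasure P] {H : Type*} [NormedAddCommGroup H] [NormedSpace ℝ H] [CompleteSpace H]
    (T : H →L[ℝ] ℝ) (g : Ω → H) (hg : Integrable g P) :
    P[fun ω => T (g ω)|m] =ᵐ[P] fun ω => T ((P[g|m]) ω) := by
  refine (ae_eq_condExp_of_forall_setIntegral_eq hm (T.integrable_comp hg)
    (fun s _ _ => (T.integrable_comp integrable_condExp).integrableOn)
    (fun s hs hμs => ?_) ?_).symm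
  · rw [T.integral_comp_comm integrable_condExp.integrableOn,
      T.integral_comp_comm hg.integrableOn, setIntegral_condExp hm hg hs]
  · exact T.continuous.comp_aestronglyMeasurable
      (StronglyMeasurable.aestronglyMeasurable stronglyMeasurable_condExp)


set_option maxHeartbeats 1000000 in
/-- **Prox-SGD, strongly convex case.**
If `l` is `μ`-strongly convex and `M`-smooth with minimizer `wbar`, `h` is proper closed
convex with `wstar` the minimizer of `l + h`, and the Prox-SGD iterates use a constant
stepsize `γ ∈ (0, min (μ/(2a)) (1/μ)]` with gradient estimators that, conditionally on
`w t`, are quadratically bounded for `∇ l` with parameters `(a, b, wstar)`, then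
`E‖w (T+1) − wstar‖² ≤ (1 − γμ)^T ‖w 0 − wstar‖² + (2γ/μ)(b + M²‖wstar − wbar‖²)`. -/
theorem prox_sgd_strongly_convex_constant_stepsize
    {H : Type*} [NormedAddCommGroup H] [InnerProductSpace ℝ H]
    [FiniteDimensional ℝ H] [MeasurableSpace H] [BorelSpace H]
    {Ω : Type*} [MeasurableSpace Ω] (P : Measure Ω) [IsProbabilityMeasure P]
    (l : H → ℝ) (l' : H → H) (h : H → EReal)
    (μ M a b γ : ℝ) (wbar wstar w0 : H)
    (w g : ℕ → Ω → H)
    (hμ : 0 < μ) (hM : 0 < M) (ha : 0 < a) (hb : 0 ≤ b)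
    -- `l` is differentiable with gradient `l'`
    (hgrad : ∀ x, HasGradientAt l (l' x) x)
    -- `l` is `μ`-strongly convex
    (hstrong : ConvexOn ℝ Set.univ (fun x => l x - μ / 2 * ‖x‖ ^ 2))
    -- `l` is `M`-smooth
    (hsmooth : ∀ x y, ‖l' x - l' y‖ ≤ M * ‖x - y‖)
    -- `wbar` is the minimizer of `l`
    (hlmin : ∀ v, l wbar ≤ l v)
    -- `h` is proper, closed and convex
    (hproper : ∃ v, h v ≠ ⊤) (hnobot : ∀ v, h v ≠ ⊥)
    (hclosed : LowerSemicontinuous h)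
    (hconvex : ∀ x y : H, ∀ t : ℝ, 0 ≤ t → t ≤ 1 →
      h (t • x + (1 - t) • y) ≤ (t : EReal) * h x + ((1 - t : ℝ) : EReal) * h y)
    -- `wstar` is the minimizer of `l + h`
    (hmin : ∀ v, (l wstar : EReal) + h wstar ≤ (l v : EReal) + h v)
    -- stepsize
    (hγ0 : 0 < γ) (hγ : γ ≤ min (μ / (2 * a)) (1 / μ))
    -- deterministic initialization
    (hw0 : ∀ ω, w 0 ω = w0)
    -- Prox-SGD iterates: `w (t+1) = prox_{γ h} (w t - γ • g t)`
    (hiter : ∀ t ω, ∀ v : H,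
      h (w (t + 1) ω) + ((‖w t ω - γ • g t ω - w (t + 1) ω‖ ^ 2 / (2 * γ) : ℝ) : EReal)
        ≤ h v + ((‖w t ω - γ • g t ω - v‖ ^ 2 / (2 * γ) : ℝ) : EReal))
    -- measurability and integrability
    (hwmeas : ∀ t, Measurable (w t))
    (hgmeas : ∀ t, Measurable (g t))
    (hgint : ∀ t, Integrable (g t) P)
    (hgsqint : ∀ t, Integrable (fun ω => ‖g t ω‖ ^ 2) P)
    (hwsqint : ∀ t, Integrable (fun ω => ‖w t ω - wstar‖ ^ 2) P)
    -- conditionally on `w t`, `g t` is an unbiased estimator of `∇ l (w t)` ...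
    (hunbiased : ∀ t, P[g t | MeasurableSpace.comap (w t) ‹MeasurableSpace H›]
        =ᵐ[P] fun ω => l' (w t ω))
    -- ... whose expected squared norm is quadratically bounded with parameters `(a, b, wstar)`
    (hnoise : ∀ t, P[(fun ω => ‖g t ω‖ ^ 2) | MeasurableSpace.comap (w t) ‹MeasurableSpace H›]
        ≤ᵐ[P] fun ω => a * ‖w t ω - wstar‖ ^ 2 + b) :
    ∀ T : ℕ, ∫ ω, ‖w (T + 1) ω - wstar‖ ^ 2 ∂P
      ≤ (1 - γ * μ) ^ T * ‖w0 - wstar‖ ^ 2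
        + 2 * γ / μ * (b + M ^ 2 * ‖wstar - wbar‖ ^ 2) := by
  obtain ⟨v0, hv0⟩ := hproper
  have hμγ1 : γ * μ ≤ 1 := by
    have h1 : γ ≤ 1 / μ := le_trans hγ (min_le_right _ _)
    rw [le_div_iff₀ hμ] at h1
    linarith
  have h2aγ : 2 * a * γ ≤ μ := by
    have h1 : γ ≤ μ / (2 * a) := le_trans hγ (min_le_left _ _)
    rw [le_div_iff₀ (by positivity)] at h1
    linarith
  have h1γμ : 0 ≤ 1 - γ * μ := by linarith
  set G : H := l' wstar with hG
  have hbar0 : l' wbar = 0 := by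
    have hmin' : IsLocalMin l wbar := Filter.Eventually.of_forall (fun v => hlmin v)
    have h0 := hmin'.hasFDerivAt_eq_zero (hgrad wbar).hasFDerivAt
    have := congrArg (InnerProductSpace.toDual ℝ H).symm h0
    simpa using this
  have hGb : ‖G‖ ≤ M * ‖wstar - wbar‖ := by
    have := hsmooth wstar wbar
    rwa [hbar0, sub_zero] at this
  have hGb2 : ‖G‖ ^ 2 ≤ M ^ 2 * ‖wstar - wbar‖ ^ 2 := by
    nlinarith [norm_nonneg G, norm_nonneg (wstar - wbar)]
  set D : ℝ := b + M ^ 2 * ‖wstar - wbar‖ ^ 2 with hD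
  have hD0 : 0 ≤ D := add_nonneg hb (by positivity)
  have hXnn : ∀ t : ℕ, 0 ≤ ∫ ω, ‖w t ω - wstar‖ ^ 2 ∂P :=
    fun t => integral_nonneg (fun ω => by positivity)
  have hX0 : ∫ ω, ‖w 0 ω - wstar‖ ^ 2 ∂P = ‖w0 - wstar‖ ^ 2 := by
    rw [show (fun ω => ‖w 0 ω - wstar‖ ^ 2) = fun _ => ‖w0 - wstar‖ ^ 2 from
      funext fun ω => by rw [hw0]]
    simp
  have hstep : ∀ t : ℕ, ∫ ω, ‖w (t + 1) ω - wstar‖ ^ 2 ∂P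
      ≤ (1 - γ * μ) * ∫ ω, ‖w t ω - wstar‖ ^ 2 ∂P + 2 * γ ^ 2 * D := by
    intro t
    have hm : MeasurableSpace.comap (w t) ‹MeasurableSpace H› ≤ ‹MeasurableSpace Ω› :=
      (hwmeas t).comap_le
    have hwm := hwmeas t
    have hgm := hgmeas t
    have hxmeas : Measurable (fun ω => w t ω - wstar) := hwm.sub measurable_const
    have hl'cont : Continuous l' := by
      have hlip : LipschitzWith (Real.toNNReal M) l' := by
        apply LipschitzWith.of_dist_le_mul
        intro x y
        rw [dist_eq_norm, dist_eq_norm]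
        calc ‖l' x - l' y‖ ≤ M * ‖x - y‖ := hsmooth x y
        _ = (Real.toNNReal M : ℝ) * ‖x - y‖ := by rw [Real.coe_toNNReal M hM.le]
      exact hlip.continuous
    have hl'wmeas : Measurable (fun ω => l' (w t ω)) := hl'cont.measurable.comp hwm
    have hx2 := hwsqint t
    have hg2 := hgsqint t
    have hgGmeas : Measurable (fun ω => g t ω - G) := hgm.sub measurable_const
    have hgG2 : Integrable (fun ω => ‖g t ω - G‖ ^ 2) P := by
      refine Integrable.mono' ((hg2.const_mul 2).add (integrable_const (2 * ‖G‖ ^ 2)))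
        (hgGmeas.norm.pow_const 2).aestronglyMeasurable ?_
      filter_upwards with ω
      simp only [Pi.add_apply]
      rw [Real.norm_eq_abs, abs_of_nonneg (by positivity)]
      have h1 : ‖g t ω - G‖ ≤ ‖g t ω‖ + ‖G‖ := norm_sub_le _ _
      have h2 := pow_le_pow_left₀ (norm_nonneg (g t ω - G)) h1 2
      nlinarith [h2, sq_nonneg (‖g t ω‖ - ‖G‖)]
    have hinner_gx : Integrable (fun ω => (inner ℝ (g t ω - G) (w t ω - wstar) : ℝ)) P := by
      refine Integrable.mono' (hgG2.add hx2) (hgGmeas.inner hxmeas).aestronglyMeasurable ?_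
      filter_upwards with ω
      simp only [Pi.add_apply]
      rw [Real.norm_eq_abs]
      have h1 := abs_real_inner_le_norm (g t ω - G) (w t ω - wstar)
      nlinarith [sq_nonneg (‖g t ω - G‖ - ‖w t ω - wstar‖), norm_nonneg (g t ω - G),
        norm_nonneg (w t ω - wstar)]
    have hinner_g : Integrable (fun ω => (inner ℝ (g t ω) (w t ω - wstar) : ℝ)) P := by
      refine Integrable.mono' (hg2.add hx2) (hgm.inner hxmeas).aestronglyMeasurable ?_
      filter_upwards with ω
      simp only [Pi.add_apply]
      rw [Real.norm_eq_abs]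
      have h1 := abs_real_inner_le_norm (g t ω) (w t ω - wstar)
      nlinarith [sq_nonneg (‖g t ω‖ - ‖w t ω - wstar‖), norm_nonneg (g t ω),
        norm_nonneg (w t ω - wstar)]
    have hinner_G : Integrable (fun ω => (inner ℝ G (w t ω - wstar) : ℝ)) P := by
      refine Integrable.mono' ((integrable_const (‖G‖ ^ 2)).add hx2)
        (measurable_const.inner hxmeas).aestronglyMeasurable ?_
      filter_upwards with ω
      simp only [Pi.add_apply]
      rw [Real.norm_eq_abs]
      have h1 := abs_real_inner_le_norm G (w t ω - wstar)
      nlinarith [sq_nonneg (‖G‖ - ‖w t ω - wstar‖), norm_nonneg G, norm_nonneg (w t ω - wstar)]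
    have hl'bnd : ∀ ω, ‖l' (w t ω)‖ ≤ M * ‖w t ω - wstar‖ + ‖G‖ := by
      intro ω
      have h1 := hsmooth (w t ω) wstar
      have h2 := norm_sub_norm_le (l' (w t ω)) G
      rw [hG]
      linarith
    have hinner_l : Integrable (fun ω => (inner ℝ (l' (w t ω)) (w t ω - wstar) : ℝ)) P := by
      refine Integrable.mono' ((hx2.const_mul M).add ((integrable_const (‖G‖ ^ 2)).add hx2))
        (hl'wmeas.inner hxmeas).aestronglyMeasurable ?_
      filter_upwards with ω
      simp only [Pi.add_apply]
      rw [Real.norm_eq_abs]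
      have h1 := abs_real_inner_le_norm (l' (w t ω)) (w t ω - wstar)
      have h2 := hl'bnd ω
      have h3 := mul_le_mul_of_nonneg_right h2 (norm_nonneg (w t ω - wstar))
      nlinarith [h1, h3, sq_nonneg (‖G‖ - ‖w t ω - wstar‖)]
    have hinner_lx : Integrable (fun ω => (inner ℝ (l' (w t ω) - G) (w t ω - wstar) : ℝ)) P := by
      refine Integrable.mono' (hx2.const_mul M)
        ((hl'wmeas.sub measurable_const).inner hxmeas).aestronglyMeasurable ?_
      filter_upwards with ω
      rw [Real.norm_eq_abs]
      have h1 := abs_real_inner_le_norm (l' (w t ω) - G) (w t ω - wstar)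
      have h2 : ‖l' (w t ω) - G‖ ≤ M * ‖w t ω - wstar‖ := hsmooth (w t ω) wstar
      nlinarith [norm_nonneg (w t ω - wstar)]
    -- the pull-out identity
    have hpull : ∫ ω, (inner ℝ (g t ω) (w t ω - wstar) : ℝ) ∂P
        = ∫ ω, (inner ℝ (l' (w t ω)) (w t ω - wstar) : ℝ) ∂P := by
      set bH := stdOrthonormalBasis ℝ H with hbH
      have hwtm : Measurable[MeasurableSpace.comap (w t) ‹MeasurableSpace H›] (w t) :=
        Measurable.of_comap_le le_rfl
      have hbnorm : ∀ i, ‖bH i‖ = 1 := fun i => bH.orthonormal.1 i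
      have habs_fi : ∀ i ω, |(inner ℝ (bH i) (w t ω - wstar) : ℝ)| ≤ ‖w t ω - wstar‖ := by
        intro i ω
        have h1 := abs_real_inner_le_norm (bH i) (w t ω - wstar)
        rwa [hbnorm i, one_mul] at h1
      have habs_gi : ∀ i ω, |(inner ℝ (bH i) (g t ω) : ℝ)| ≤ ‖g t ω‖ := by
        intro i ω
        have h1 := abs_real_inner_le_norm (bH i) (g t ω)
        rwa [hbnorm i, one_mul] at h1
      have hfg_int : ∀ i, Integrable
          (fun ω => (inner ℝ (bH i) (w t ω - wstar) : ℝ) * (innerSL ℝ (bH i)) (g t ω)) P := by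
        intro i
        refine Integrable.mono' (hx2.add hg2)
          ((measurable_const.inner hxmeas).mul (measurable_const.inner hgm)).aestronglyMeasurable
          ?_
        filter_upwards with ω
        simp only [Pi.add_apply, innerSL_apply_apply]
        rw [Real.norm_eq_abs, abs_mul]
        have h3 := mul_le_mul (habs_fi i ω) (habs_gi i ω) (abs_nonneg _) (norm_nonneg _)
        nlinarith [h3, sq_nonneg (‖w t ω - wstar‖ - ‖g t ω‖)]
      have hfl_int : ∀ i, Integrable
          (fun ω => (inner ℝ (bH i) (w t ω - wstar) : ℝ) * (inner ℝ (bH i) (l' (w t ω)) : ℝ)) P := by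
        intro i
        refine Integrable.mono' ((hx2.const_mul M).add ((integrable_const (‖G‖ ^ 2)).add hx2))
          ((measurable_const.inner hxmeas).mul
            (measurable_const.inner hl'wmeas)).aestronglyMeasurable ?_
        filter_upwards with ω
        simp only [Pi.add_apply]
        rw [Real.norm_eq_abs, abs_mul]
        have habs_li : |(inner ℝ (bH i) (l' (w t ω)) : ℝ)| ≤ ‖l' (w t ω)‖ := by
          have h1 := abs_real_inner_le_norm (bH i) (l' (w t ω))
          rwa [hbnorm i, one_mul] at h1
        have h3 := mul_le_mul (habs_fi i ω) habs_li (abs_nonneg _) (norm_nonneg _)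
        have h2 := hl'bnd ω
        have h4 := mul_le_mul_of_nonneg_left h2 (norm_nonneg (w t ω - wstar))
        nlinarith [h3, h4, sq_nonneg (‖G‖ - ‖w t ω - wstar‖)]
      have hterm : ∀ i, ∫ ω, (inner ℝ (bH i) (w t ω - wstar) : ℝ) * (innerSL ℝ (bH i)) (g t ω) ∂P
          = ∫ ω, (inner ℝ (bH i) (w t ω - wstar) : ℝ) * (inner ℝ (bH i) (l' (w t ω)) : ℝ) ∂P := by
        intro i
        have hfi_sm : StronglyMeasurable[MeasurableSpace.comap (w t) ‹MeasurableSpace H›]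
            (fun ω => (inner ℝ (bH i) (w t ω - wstar) : ℝ)) := by
          have hφ : Measurable (fun v : H => (inner ℝ (bH i) (v - wstar) : ℝ)) :=
            measurable_const.inner (measurable_id.sub measurable_const)
          exact (hφ.comp hwtm).stronglyMeasurable
        have hTg_int : Integrable (fun ω => (innerSL ℝ (bH i)) (g t ω)) P :=
          (innerSL ℝ (bH i)).integrable_comp (hgint t)
        have h1 := condExp_mul_of_stronglyMeasurable_left (μ := P) hfi_sm (hfg_int i) hTg_int
        have h2 := aux_condexp_clm hm P (innerSL ℝ (bH i)) (g t) (hgint t)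
        have h3 := hunbiased t
        have e1 : ∫ ω, (inner ℝ (bH i) (w t ω - wstar) : ℝ) * (innerSL ℝ (bH i)) (g t ω) ∂P
            = ∫ ω, (P[(fun ω => (inner ℝ (bH i) (w t ω - wstar) : ℝ) * (innerSL ℝ (bH i)) (g t ω))
                | MeasurableSpace.comap (w t) ‹MeasurableSpace H›]) ω ∂P :=
          (integral_condExp (f := fun ω => (inner ℝ (bH i) (w t ω - wstar) : ℝ)
            * (innerSL ℝ (bH i)) (g t ω)) hm).symm
        rw [e1]
        refine integral_congr_ae ?_
        filter_upwards [h1, h2, h3] with ω h1ω h2ω h3ω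
        refine Eq.trans h1ω ?_
        simp only [Pi.mul_apply]
        rw [h2ω, h3ω]
        rfl
      have hs1 : (fun ω => (inner ℝ (g t ω) (w t ω - wstar) : ℝ))
          = fun ω => ∑ i, (inner ℝ (bH i) (w t ω - wstar) : ℝ) * (innerSL ℝ (bH i)) (g t ω) := by
        funext ω
        rw [← bH.sum_inner_mul_inner (g t ω) (w t ω - wstar)]
        refine Finset.sum_congr rfl (fun i _ => ?_)
        rw [real_inner_comm (bH i) (g t ω), mul_comm, innerSL_apply_apply]
      have hs2 : (fun ω => (inner ℝ (l' (w t ω)) (w t ω - wstar) : ℝ))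
          = fun ω => ∑ i, (inner ℝ (bH i) (w t ω - wstar) : ℝ)
            * (inner ℝ (bH i) (l' (w t ω)) : ℝ) := by
        funext ω
        rw [← bH.sum_inner_mul_inner (l' (w t ω)) (w t ω - wstar)]
        refine Finset.sum_congr rfl (fun i _ => ?_)
        rw [real_inner_comm (bH i) (l' (w t ω)), mul_comm]
      rw [hs1, hs2, integral_finset_sum _ (fun i _ => hfg_int i),
        integral_finset_sum _ (fun i _ => hfl_int i)]
      exact Finset.sum_congr rfl (fun i _ => hterm i)
    -- lower bound on the cross term
    have hI1 : μ * ∫ ω, ‖w t ω - wstar‖ ^ 2 ∂P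
        ≤ ∫ ω, (inner ℝ (g t ω - G) (w t ω - wstar) : ℝ) ∂P := by
      have heq : ∫ ω, (inner ℝ (g t ω - G) (w t ω - wstar) : ℝ) ∂P
          = ∫ ω, (inner ℝ (l' (w t ω) - G) (w t ω - wstar) : ℝ) ∂P := by
        simp only [inner_sub_left]
        rw [integral_sub hinner_g hinner_G, integral_sub hinner_l hinner_G, hpull]
      rw [heq, ← integral_const_mul]
      exact integral_mono (hx2.const_mul μ) hinner_lx
        (fun ω => aux_grad_strong_mono l l' μ hgrad hstrong (w t ω) wstar)
    -- second moment bound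
    have hEg2 : ∫ ω, ‖g t ω‖ ^ 2 ∂P ≤ a * ∫ ω, ‖w t ω - wstar‖ ^ 2 ∂P + b := by
      have h1 : ∫ ω, ‖g t ω‖ ^ 2 ∂P = ∫ ω, (P[(fun ω => ‖g t ω‖ ^ 2)
          | MeasurableSpace.comap (w t) ‹MeasurableSpace H›]) ω ∂P :=
        (integral_condExp (f := fun ω => ‖g t ω‖ ^ 2) hm).symm
      rw [h1]
      have h2 := integral_mono_ae integrable_condExp
        ((hx2.const_mul a).add (integrable_const b)) (hnoise t)
      calc ∫ ω, (P[(fun ω => ‖g t ω‖ ^ 2)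
            | MeasurableSpace.comap (w t) ‹MeasurableSpace H›]) ω ∂P
          ≤ ∫ ω, (a * ‖w t ω - wstar‖ ^ 2 + b) ∂P := h2
        _ = a * ∫ ω, ‖w t ω - wstar‖ ^ 2 ∂P + b := by
            rw [integral_add (hx2.const_mul a) (integrable_const b), integral_const_mul,
              integral_const]
            simp
    have hI2 : ∫ ω, ‖g t ω - G‖ ^ 2 ∂P
        ≤ 2 * (a * ∫ ω, ‖w t ω - wstar‖ ^ 2 ∂P + b) + 2 * ‖G‖ ^ 2 := by
      have h1 : ∫ ω, ‖g t ω - G‖ ^ 2 ∂P ≤ ∫ ω, (2 * ‖g t ω‖ ^ 2 + 2 * ‖G‖ ^ 2) ∂P := by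
        refine integral_mono hgG2 ((hg2.const_mul 2).add (integrable_const _)) (fun ω => ?_)
        have h2 := norm_sub_le (g t ω) G
        have h3 := pow_le_pow_left₀ (norm_nonneg (g t ω - G)) h2 2
        nlinarith [h3, sq_nonneg (‖g t ω‖ - ‖G‖)]
      rw [integral_add (hg2.const_mul 2) (integrable_const _), integral_const_mul,
        integral_const] at h1
      simp only [measure_univ, ENNReal.toReal_one, smul_eq_mul, one_mul, probReal_univ] at h1
      linarith [hEg2]
    -- pointwise inequality
    have hptwise : ∀ ω, ‖w (t + 1) ω - wstar‖ ^ 2 ≤ ‖w t ω - wstar‖ ^ 2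
        - 2 * γ * (inner ℝ (g t ω - G) (w t ω - wstar) : ℝ) + γ ^ 2 * ‖g t ω - G‖ ^ 2 := by
      intro ω
      have hk := aux_prox_key h l G wstar γ hγ0 hconvex hnobot v0 hv0 hmin (hgrad wstar)
        (w t ω - γ • g t ω) (w (t + 1) ω) (hiter t ω)
      have he : (w t ω - γ • g t ω) + γ • G - wstar
          = (w t ω - wstar) - γ • (g t ω - G) := by
        rw [smul_sub]; abel
      rw [he] at hk
      refine hk.trans_eq ?_
      rw [norm_sub_sq_real, real_inner_smul_right, norm_smul, Real.norm_eq_abs, mul_pow, sq_abs,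
        real_inner_comm]
      ring
    have hA2 : Integrable (fun ω => 2 * γ * (inner ℝ (g t ω - G) (w t ω - wstar) : ℝ)) P := by
      exact hinner_gx.const_mul (2 * γ)
    have hC2 : Integrable (fun ω => γ ^ 2 * ‖g t ω - G‖ ^ 2) P := by
      exact hgG2.const_mul (γ ^ 2)
    have hsub2 : Integrable (fun ω => ‖w t ω - wstar‖ ^ 2
        - 2 * γ * (inner ℝ (g t ω - G) (w t ω - wstar) : ℝ)) P := by
      exact hx2.sub hA2
    have hRHSint : Integrable (fun ω => ‖w t ω - wstar‖ ^ 2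
        - 2 * γ * (inner ℝ (g t ω - G) (w t ω - wstar) : ℝ) + γ ^ 2 * ‖g t ω - G‖ ^ 2) P := by
      exact hsub2.add hC2
    have hle1 := integral_mono (hwsqint (t + 1)) hRHSint hptwise
    have hsplit : ∫ ω, (‖w t ω - wstar‖ ^ 2
        - 2 * γ * (inner ℝ (g t ω - G) (w t ω - wstar) : ℝ) + γ ^ 2 * ‖g t ω - G‖ ^ 2) ∂P
        = ∫ ω, ‖w t ω - wstar‖ ^ 2 ∂P
          - 2 * γ * ∫ ω, (inner ℝ (g t ω - G) (w t ω - wstar) : ℝ) ∂P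
          + γ ^ 2 * ∫ ω, ‖g t ω - G‖ ^ 2 ∂P := by
      rw [integral_add hsub2 hC2, integral_sub hx2 hA2, integral_const_mul, integral_const_mul]
    rw [hsplit] at hle1
    have ha1 := mul_le_mul_of_nonneg_left hI1 (by linarith : (0:ℝ) ≤ 2 * γ)
    have ha2 := mul_le_mul_of_nonneg_left hI2 (sq_nonneg γ)
    have ha3 := mul_le_mul_of_nonneg_right
      (mul_le_mul_of_nonneg_right h2aγ hγ0.le) (hXnn t)
    have ha4 := mul_le_mul_of_nonneg_left hGb2 (by positivity : (0:ℝ) ≤ 2 * γ ^ 2)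
    nlinarith [hle1, ha1, ha2, ha3, ha4, hD]
  intro T
  induction T with
  | zero =>
    have h1 := hstep 0
    rw [hX0] at h1
    rw [pow_zero, one_mul]
    have h2 : 2 * γ ^ 2 * D ≤ 2 * γ / μ * D := by
      rw [div_mul_eq_mul_div, le_div_iff₀ hμ]
      nlinarith [mul_nonneg (mul_nonneg (by linarith : (0:ℝ) ≤ 2 * γ) hD0)
        (by linarith : (0:ℝ) ≤ 1 - γ * μ)]
    nlinarith [h1, h2, sq_nonneg ‖w0 - wstar‖,
      mul_nonneg (mul_nonneg hγ0.le hμ.le) (sq_nonneg ‖w0 - wstar‖)]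
  | succ T ih =>
    have h1 := hstep (T + 1)
    have h2 := mul_le_mul_of_nonneg_left ih h1γμ
    have h3 : (1 - γ * μ) * ((1 - γ * μ) ^ T * ‖w0 - wstar‖ ^ 2 + 2 * γ / μ * D)
        = (1 - γ * μ) ^ (T + 1) * ‖w0 - wstar‖ ^ 2 + 2 * γ / μ * D - (γ * μ) * (2 * γ / μ * D) := by
      rw [pow_succ]
      ring
    have h4 : (γ * μ) * (2 * γ / μ * D) = 2 * γ ^ 2 * D := by
      field_simp
    calc ∫ ω, ‖w (T + 1 + 1) ω - wstar‖ ^ 2 ∂P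
        ≤ (1 - γ * μ) * ∫ ω, ‖w (T + 1) ω - wstar‖ ^ 2 ∂P + 2 * γ ^ 2 * D := h1
      _ ≤ (1 - γ * μ) * ((1 - γ * μ) ^ T * ‖w0 - wstar‖ ^ 2 + 2 * γ / μ * D)
          + 2 * γ ^ 2 * D := by linarith
      _ = (1 - γ * μ) ^ (T + 1) * ‖w0 - wstar‖ ^ 2 + 2 * γ / μ * D := by
          rw [h3, h4]; ring
end

section
/- Let H be a real finite-dimensional inner product space, let W ⊆ H be a nonempty closed convex set, let f : H → ℝ be μ-strongly convex and differentiable on W, and let w* be the minimizer of f over W. Let (w^t) be generated by Proj-SGD with constant stepsize γ ∈ (0, min{μ/(2a), 2/μ}], where conditionally on w^t the estimator g^t is a quadratically bounded estimator for ∇f at w^t with parameters (a, b, w*). Then for every T ≥ 0, E‖w^T − w*‖² ≤ (1 − μγ/2)^T ‖w⁰ − w*‖² + 2γb/μ. -/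
open MeasureTheory

open scoped RealInnerProductSpace

lemma condexp_clm_comm {α : Type*} {m m0 : MeasurableSpace α} {μ : Measure α} [IsFiniteMeasure μ]
    (hm : m ≤ m0) {H : Type*} [NormedAddCommGroup H] [NormedSpace ℝ H] [CompleteSpace H]
    {g : α → H} (hg : Integrable g μ) (T : H →L[ℝ] ℝ) :
    (μ[(fun ω => T (g ω))|m]) =ᵐ[μ] fun ω => T ((μ[g|m]) ω) := by
  haveI : SigmaFinite (μ.trim hm) := by infer_instance
  refine (ae_eq_condExp_of_forall_setIntegral_eq hm (T.integrable_comp hg)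
    (fun s _ _ => (T.integrable_comp integrable_condExp).integrableOn)
    (fun s hs hμs => ?_) ?_).symm
  · rw [T.integral_comp_comm integrable_condExp.integrableOn,
      T.integral_comp_comm hg.integrableOn, setIntegral_condExp hm hg hs]
  · exact (T.continuous.comp_stronglyMeasurable (stronglyMeasurable_condExp (m := m) (μ := μ) (f := g))).aestronglyMeasurable

lemma convexOn_grad_ineq {H : Type*} [NormedAddCommGroup H] [InnerProductSpace ℝ H]
    [CompleteSpace H]
    {φ : H → ℝ} (hφ : ConvexOn ℝ Set.univ φ) {x G : H} (hG : HasGradientAt φ G x) (y : H) :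
    φ x + ⟪G, y - x⟫ ≤ φ y := by
  set ψ : ℝ → ℝ := fun t => φ (x + t • (y - x)) with hψdef
  have hconv : ConvexOn ℝ Set.univ ψ := by
    have h := hφ.comp_affineMap (AffineMap.lineMap x y)
    have : ψ = φ ∘ (AffineMap.lineMap x y) := by
      funext t; simp [hψdef, AffineMap.lineMap_apply, add_comm]
    rw [this]
    simpa using h
  have hd : HasDerivAt ψ ⟪G, y - x⟫ 0 := by
    have h1 : HasDerivAt (fun t : ℝ => x + t • (y - x)) (y - x) 0 := by
      simpa using ((hasDerivAt_id (0:ℝ)).smul_const (y - x)).const_add x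
    have hx0 : x + (0:ℝ) • (y - x) = x := by simp
    have h2 := HasFDerivAt.comp_hasDerivAt 0 (hx0 ▸ hasGradientAt_iff_hasFDerivAt.1 hG) h1
    simp at h2; exact h2
  have hs := hconv.le_slope_of_hasDerivAt (Set.mem_univ (0:ℝ)) (Set.mem_univ 1) one_pos hd
  have hψ0 : ψ 0 = φ x := by simp [hψdef]
  have hψ1 : ψ 1 = φ y := by simp [hψdef]
  rw [slope_def_field] at hs
  simp [hψ0, hψ1, div_one] at hs
  linarith

lemma strong_grad_bound {H : Type*} [NormedAddCommGroup H] [InnerProductSpace ℝ H]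
    [CompleteSpace H] {f : H → ℝ} {f' : H → H} {μ : ℝ} {wstar x : H}
    (hstrong : ConvexOn ℝ Set.univ (fun x => f x - μ / 2 * ‖x‖ ^ 2))
    (hG : HasGradientAt f (f' x) x)
    (hfx : f wstar ≤ f x) :
    μ / 2 * ‖x - wstar‖ ^ 2 ≤ ⟪x - wstar, f' x⟫ := by
  have hGφ : HasGradientAt (fun v => f v - μ / 2 * ‖v‖ ^ 2) (f' x - μ • x) x := by
    rw [hasGradientAt_iff_hasFDerivAt]
    have h2 : HasFDerivAt (fun v : H => μ / 2 * ‖v‖ ^ 2)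
        ((μ / 2) • (2 • (innerSL ℝ x))) x :=
      (hasStrictFDerivAt_norm_sq x).hasFDerivAt.const_smul (μ / 2)
    have h3 := (hasGradientAt_iff_hasFDerivAt.1 hG).sub h2
    refine h3.congr_fderiv ?_
    ext v
    simp [inner_sub_left, real_inner_smul_left]
    ring
  have key := convexOn_grad_ineq hstrong hGφ wstar
  have e5' : ⟪x, x⟫ = ‖x‖ ^ 2 := real_inner_self_eq_norm_sq x
  have e1 : ⟪f' x - μ • x, wstar - x⟫
      = ⟪f' x, wstar - x⟫ - μ * ⟪x, wstar⟫ + μ * ‖x‖ ^ 2 := by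
    simp [inner_sub_left, inner_sub_right, real_inner_smul_left, e5']
    ring
  have e3 : ‖x - wstar‖ ^ 2 = ‖x‖ ^ 2 - 2 * ⟪x, wstar⟫ + ‖wstar‖ ^ 2 := by
    rw [← real_inner_self_eq_norm_sq, ← real_inner_self_eq_norm_sq,
      ← real_inner_self_eq_norm_sq]
    simp [inner_sub_left, inner_sub_right, real_inner_comm]
    rw [norm_sub_sq_real, real_inner_comm x wstar]
  have e4 : ⟪x - wstar, f' x⟫ = -⟪f' x, wstar - x⟫ := by
    rw [real_inner_comm]; simp [inner_sub_left, inner_sub_right]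
  have e5 : ⟪x, x⟫ = ‖x‖ ^ 2 := real_inner_self_eq_norm_sq x
  rw [e1] at key
  rw [e4, e3]
  nlinarith [key, hfx]

lemma proj_sq_le {H : Type*} [NormedAddCommGroup H] [InnerProductSpace ℝ H]
    {W : Set H} (hWconvex : Convex ℝ W) {u p v : H} (hp : p ∈ W) (hv : v ∈ W)
    (hmin : ∀ q ∈ W, ‖p - u‖ ≤ ‖q - u‖) : ‖p - v‖ ^ 2 ≤ ‖u - v‖ ^ 2 := by
  haveI : Nonempty W := ⟨⟨p, hp⟩⟩
  have hinf : ‖u - p‖ = ⨅ w : W, ‖u - w‖ := by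
    refine le_antisymm (le_ciInf fun w => ?_) (ciInf_le (f := fun w : W => ‖u - w‖) ⟨0, ?_⟩ ⟨p, hp⟩)
    · rw [norm_sub_rev, norm_sub_rev u (w : H)]; exact hmin w w.2
    · rintro _ ⟨w, rfl⟩; exact norm_nonneg _
  have hip : ⟪u - p, v - p⟫ ≤ 0 :=
    (norm_eq_iInf_iff_real_inner_le_zero hWconvex hp).1 hinf v hv
  have hdecomp : u - v = (u - p) + (p - v) := by abel
  have hexp : ‖u - v‖ ^ 2 = ‖u - p‖ ^ 2 + 2 * ⟪u - p, p - v⟫ + ‖p - v‖ ^ 2 := by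
    rw [hdecomp]; exact norm_add_sq_real _ _
  have hneg : ⟪u - p, p - v⟫ = -⟪u - p, v - p⟫ := by
    rw [← inner_neg_right]; congr 1; abel
  nlinarith [sq_nonneg ‖u - p‖]

lemma integral_inner_condexp
    {H : Type*} [NormedAddCommGroup H] [InnerProductSpace ℝ H]
    [FiniteDimensional ℝ H] [MeasurableSpace H] [BorelSpace H]
    {Ω : Type*} [mΩ : MeasurableSpace Ω] {P : Measure Ω} [IsProbabilityMeasure P]
    {X g : Ω → H} {φ ρ : H → H}
    (hX : Measurable X) (hg : Measurable g) (hφ : Measurable φ)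
    (hgint : Integrable g P) (hgsq : Integrable (fun ω => ‖g ω‖ ^ 2) P)
    (hφsq : Integrable (fun ω => ‖φ (X ω)‖ ^ 2) P)
    (hcond : (P[g | MeasurableSpace.comap X ‹MeasurableSpace H›]) =ᵐ[P]
      fun ω => ρ (X ω)) :
    Integrable (fun ω => ⟪φ (X ω), ρ (X ω)⟫) P ∧
    ∫ ω, ⟪φ (X ω), g ω⟫ ∂P = ∫ ω, ⟪φ (X ω), ρ (X ω)⟫ ∂P := by
  set m : MeasurableSpace Ω := MeasurableSpace.comap X ‹MeasurableSpace H› with hmdef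
  have hm : m ≤ mΩ := hX.comap_le
  haveI : SigmaFinite (P.trim hm) := by infer_instance
  have hXm : Measurable[m] X := fun s hs => ⟨s, hs, rfl⟩
  set b := stdOrthonormalBasis ℝ H with hbdef
  set n := Module.finrank ℝ H
  set u : Fin n → Ω → ℝ := fun i ω => ⟪b i, φ (X ω)⟫ with hudef
  set gi : Fin n → Ω → ℝ := fun i ω => ⟪b i, g ω⟫ with hgidef
  set ri : Fin n → Ω → ℝ := fun i ω => ⟪b i, ρ (X ω)⟫ with hridef
  have hu_sm : ∀ i, StronglyMeasurable[m] (u i) := fun i =>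
    ((innerSL ℝ (b i)).continuous.measurable.comp (hφ.comp hXm)).stronglyMeasurable
  have hgi_int : ∀ i, Integrable (gi i) P := fun i => (innerSL ℝ (b i)).integrable_comp hgint
  -- integrability of the products
  have hbound : Integrable (fun ω => (‖φ (X ω)‖ ^ 2 + ‖g ω‖ ^ 2) / 2) P :=
    (hφsq.add hgsq).div_const 2
  have habs : ∀ i ω, ‖u i ω * gi i ω‖ ≤ (‖φ (X ω)‖ ^ 2 + ‖g ω‖ ^ 2) / 2 := by
    intro i ω
    have h1 : |⟪b i, φ (X ω)⟫| ≤ ‖φ (X ω)‖ := by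
      have := abs_real_inner_le_norm (b i) (φ (X ω))
      simpa [b.orthonormal.1 i] using this
    have h2 : |⟪b i, g ω⟫| ≤ ‖g ω‖ := by
      have := abs_real_inner_le_norm (b i) (g ω)
      simpa [b.orthonormal.1 i] using this
    have h3 : ‖u i ω * gi i ω‖ = |⟪b i, φ (X ω)⟫| * |⟪b i, g ω⟫| := by
      simp [hudef, hgidef, abs_mul]
    rw [h3]
    nlinarith [sq_nonneg (‖φ (X ω)‖ - ‖g ω‖),
      mul_le_mul h1 h2 (abs_nonneg _) (norm_nonneg _)]
  have hug_meas : ∀ i, AEStronglyMeasurable[mΩ] (fun ω => u i ω * gi i ω) P := fun i =>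
    (((innerSL ℝ (b i)).continuous.measurable.comp (hφ.comp hX)).mul
      ((innerSL ℝ (b i)).continuous.measurable.comp hg)).aestronglyMeasurable
  have hug_int : ∀ i, Integrable (fun ω => u i ω * gi i ω) P := fun i =>
    Integrable.mono' hbound (hug_meas i) (Filter.Eventually.of_forall (habs i))
  -- conditional expectation computations
  have hci : ∀ i, (P[gi i|m]) =ᵐ[P] ri i := by
    intro i
    have h1 := condexp_clm_comm hm hgint (innerSL ℝ (b i))
    have h2 : (fun ω => innerSL ℝ (b i) ((P[g|m]) ω)) =ᵐ[P] ri i := by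
      filter_upwards [hcond] with ω hω
      simp [hridef, hω]
    exact h1.trans h2
  have hpull : ∀ i, (P[fun ω => u i ω * gi i ω|m]) =ᵐ[P] fun ω => u i ω * (P[gi i|m]) ω := by
    intro i
    have := condExp_mul_of_stronglyMeasurable_left (hu_sm i)
      (show Integrable (u i * gi i) P from hug_int i) (hgi_int i)
    exact this
  have hur_int : ∀ i, Integrable (fun ω => u i ω * ri i ω) P := by
    intro i
    refine (integrable_condExp.congr (hpull i)).congr ?_
    filter_upwards [hci i] with ω hω
    rw [hω]
  have hkey : ∀ i, ∫ ω, u i ω * gi i ω ∂P = ∫ ω, u i ω * ri i ω ∂P := by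
    intro i
    rw [← integral_condExp hm (f := fun ω => u i ω * gi i ω)]
    refine integral_congr_ae ?_
    refine (hpull i).trans ?_
    filter_upwards [hci i] with ω hω
    rw [hω]
  have hexpand : ∀ (x y : H), ⟪x, y⟫ = ∑ i, ⟪b i, x⟫ * ⟪b i, y⟫ := by
    intro x y
    rw [← b.sum_inner_mul_inner x y]
    congr 1; funext i; rw [real_inner_comm x (b i)]
  constructor
  · have he : (fun ω => ⟪φ (X ω), ρ (X ω)⟫) = fun ω => ∑ i, u i ω * ri i ω :=
      funext fun ω => hexpand _ _
    rw [he]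
    exact integrable_finset_sum _ fun i _ => hur_int i
  calc ∫ ω, ⟪φ (X ω), g ω⟫ ∂P = ∫ ω, ∑ i, u i ω * gi i ω ∂P := by
        congr 1; funext ω; exact hexpand _ _
    _ = ∑ i, ∫ ω, u i ω * gi i ω ∂P := integral_finset_sum _ fun i _ => hug_int i
    _ = ∑ i, ∫ ω, u i ω * ri i ω ∂P := by exact Finset.sum_congr rfl fun i _ => hkey i
    _ = ∫ ω, ∑ i, u i ω * ri i ω ∂P := (integral_finset_sum _ fun i _ => hur_int i).symm
    _ = ∫ ω, ⟪φ (X ω), ρ (X ω)⟫ ∂P := by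
        congr 1; funext ω; exact (hexpand _ _).symm


/-- **Proj-SGD, strongly convex case, constant stepsize.**
If `W` is nonempty closed convex, `f` is `μ`-strongly convex and differentiable on `W` with
minimizer `wstar` over `W`, and Proj-SGD is run with constant stepsize
`γ ∈ (0, min (μ/(2a)) (2/μ)]` with gradient estimators that, conditionally on `w t`, are
quadratically bounded for `∇ f` with parameters `(a, b, wstar)`, then
`E‖w T − wstar‖² ≤ (1 − μγ/2)^T ‖w 0 − wstar‖² + 2γb/μ`. -/
theorem proj_sgd_strongly_convex_constant_stepsize
    {H : Type*} [NormedAddCommGroup H] [InnerProductSpace ℝ H]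
    [FiniteDimensional ℝ H] [MeasurableSpace H] [BorelSpace H]
    {Ω : Type*} [MeasurableSpace Ω] (P : Measure Ω) [IsProbabilityMeasure P]
    (W : Set H) (f : H → ℝ) (f' : H → H)
    (μ a b γ : ℝ) (wstar w0 : H)
    (w g : ℕ → Ω → H)
    (hμ : 0 < μ) (ha : 0 < a) (hb : 0 ≤ b)
    -- `W` is a nonempty closed convex set
    (hWne : W.Nonempty) (hWclosed : IsClosed W) (hWconvex : Convex ℝ W)
    -- `f` is `μ`-strongly convex
    (hstrong : ConvexOn ℝ Set.univ (fun x => f x - μ / 2 * ‖x‖ ^ 2))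
    -- `f` is differentiable on `W` with gradient `f'`
    (hgrad : ∀ x ∈ W, HasGradientAt f (f' x) x)
    -- `wstar` is the minimizer of `f` over `W`
    (hstarW : wstar ∈ W) (hmin : ∀ v ∈ W, f wstar ≤ f v)
    -- stepsize
    (hγ0 : 0 < γ) (hγ : γ ≤ min (μ / (2 * a)) (2 / μ))
    -- deterministic initialization in `W`
    (hw0 : ∀ ω, w 0 ω = w0) (hw0W : w0 ∈ W)
    -- Proj-SGD iterates: `w (t+1) = proj_W (w t - γ • g t)`
    (hiterW : ∀ t ω, w (t + 1) ω ∈ W)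
    (hiter : ∀ t ω, ∀ v ∈ W,
      ‖w (t + 1) ω - (w t ω - γ • g t ω)‖ ≤ ‖v - (w t ω - γ • g t ω)‖)
    -- measurability and integrability
    (hwmeas : ∀ t, Measurable (w t))
    (hgmeas : ∀ t, Measurable (g t))
    (hgint : ∀ t, Integrable (g t) P)
    (hgsqint : ∀ t, Integrable (fun ω => ‖g t ω‖ ^ 2) P)
    (hwsqint : ∀ t, Integrable (fun ω => ‖w t ω - wstar‖ ^ 2) P)
    -- conditionally on `w t`, `g t` is an unbiased estimator of `∇ f (w t)` ...
    (hunbiased : ∀ t, P[g t | MeasurableSpace.comap (w t) ‹MeasurableSpace H›]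
        =ᵐ[P] fun ω => f' (w t ω))
    -- ... whose expected squared norm is quadratically bounded with parameters `(a, b, wstar)`
    (hnoise : ∀ t, P[(fun ω => ‖g t ω‖ ^ 2) | MeasurableSpace.comap (w t) ‹MeasurableSpace H›]
        ≤ᵐ[P] fun ω => a * ‖w t ω - wstar‖ ^ 2 + b) :
    ∀ T : ℕ, ∫ ω, ‖w T ω - wstar‖ ^ 2 ∂P
      ≤ (1 - μ * γ / 2) ^ T * ‖w0 - wstar‖ ^ 2 + 2 * γ * b / μ := by
  have hWt : ∀ t ω, w t ω ∈ W := by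
    intro t ω
    cases t with
    | zero => rw [hw0]; exact hw0W
    | succ n => exact hiterW n ω
  set D : ℕ → ℝ := fun t => ∫ ω, ‖w t ω - wstar‖ ^ 2 ∂P with hDdef
  have hD0 : D 0 = ‖w0 - wstar‖ ^ 2 := by
    simp only [hDdef, hw0]
    simp [integral_const]
  have hDnonneg : ∀ t, 0 ≤ D t := fun t => integral_nonneg fun ω => sq_nonneg _
  have hγa : γ * (2 * a) ≤ μ := by
    have h := le_trans hγ (min_le_left _ _)
    rwa [le_div_iff₀ (by positivity)] at h
  have hγμ : γ * μ ≤ 2 := by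
    have h := le_trans hγ (min_le_right _ _)
    rwa [le_div_iff₀ hμ] at h
  have hq0 : 0 ≤ 1 - μ * γ / 2 := by nlinarith
  -- one-step inequality
  have hstep : ∀ t, D (t + 1) ≤ (1 - μ * γ / 2) * D t + γ ^ 2 * b := by
    intro t
    -- pointwise recursion
    have hpoint : ∀ ω, ‖w (t + 1) ω - wstar‖ ^ 2
        ≤ ‖(w t ω - wstar)‖ ^ 2 - 2 * γ * ⟪(w t ω - wstar), g t ω⟫ + γ ^ 2 * ‖g t ω‖ ^ 2 := by
      intro ω
      have h1 : ‖w (t + 1) ω - wstar‖ ^ 2 ≤ ‖(w t ω - γ • g t ω) - wstar‖ ^ 2 :=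
        proj_sq_le hWconvex (hiterW t ω) hstarW fun q hq => hiter t ω q hq
      have h2 : (w t ω - γ • g t ω) - wstar = (w t ω - wstar) - γ • g t ω := by
        abel
      have h3 : ‖(w t ω - wstar) - γ • g t ω‖ ^ 2
          = ‖(w t ω - wstar)‖ ^ 2 - 2 * γ * ⟪(w t ω - wstar), g t ω⟫ + γ ^ 2 * ‖g t ω‖ ^ 2 := by
        rw [norm_sub_sq_real, real_inner_smul_right, norm_smul]
        simp [mul_pow, sq_abs]
        ring
      rw [h2, h3] at h1
      exact h1
    -- integrability
    have hinner_meas : AEStronglyMeasurable (fun ω => ⟪(w t ω - wstar), g t ω⟫) P :=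
      (((hwmeas t).sub measurable_const).inner (hgmeas t)).aestronglyMeasurable
    have hinner_int : Integrable (fun ω => ⟪(w t ω - wstar), g t ω⟫) P := by
      refine Integrable.mono' (((hwsqint t).add (hgsqint t)).div_const 2) hinner_meas
        (Filter.Eventually.of_forall fun ω => ?_)
      have h1 := abs_real_inner_le_norm ((w t ω - wstar)) (g t ω)
      have h2 := sq_nonneg (‖(w t ω - wstar)‖ - ‖g t ω‖)
      have h3 : ‖⟪(w t ω - wstar), g t ω⟫‖ = |⟪(w t ω - wstar), g t ω⟫| := rfl
      rw [h3]
      simp only [Pi.add_apply]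
      nlinarith [norm_nonneg ((w t ω - wstar)), norm_nonneg (g t ω)]
    have hRHS_int : Integrable (fun ω =>
        ‖(w t ω - wstar)‖ ^ 2 - 2 * γ * ⟪(w t ω - wstar), g t ω⟫ + γ ^ 2 * ‖g t ω‖ ^ 2) P :=
      ((hwsqint t).sub (hinner_int.const_mul (2 * γ))).add ((hgsqint t).const_mul (γ ^ 2))
    -- conditional expectation facts
    have hkey := integral_inner_condexp (P := P) (X := w t) (g := g t)
      (φ := fun x => x - wstar) (ρ := f') (hwmeas t) (hgmeas t)
      (measurable_id.sub measurable_const) (hgint t) (hgsqint t) (hwsqint t) (hunbiased t)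
    obtain ⟨hfint, hfeq⟩ := hkey
    have hinner_lb : μ / 2 * D t ≤ ∫ ω, ⟪(w t ω - wstar), g t ω⟫ ∂P := by
      rw [show (∫ ω, ⟪(w t ω - wstar), g t ω⟫ ∂P) = ∫ ω, ⟪w t ω - wstar, f' (w t ω)⟫ ∂P from hfeq]
      have : μ / 2 * D t = ∫ ω, μ / 2 * ‖w t ω - wstar‖ ^ 2 ∂P := by
        rw [hDdef, integral_const_mul]
      rw [this]
      refine integral_mono ((hwsqint t).const_mul _) hfint fun ω => ?_
      exact strong_grad_bound hstrong (hgrad _ (hWt t ω)) (hmin _ (hWt t ω))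
    have hnoise_ub : ∫ ω, ‖g t ω‖ ^ 2 ∂P ≤ a * D t + b := by
      have hm : MeasurableSpace.comap (w t) ‹MeasurableSpace H› ≤ _ := (hwmeas t).comap_le
      have h1 := integral_mono_ae integrable_condExp
        (((hwsqint t).const_mul a).add (integrable_const b)) (hnoise t)
      rw [integral_condExp hm] at h1
      have h2 : ∫ ω, (a * ‖w t ω - wstar‖ ^ 2 + b) ∂P = a * D t + b := by
        rw [integral_add ((hwsqint t).const_mul a) (integrable_const b),
          integral_const_mul, hDdef]
        simp [integral_const]
      simp only [Pi.add_apply] at h1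
      rwa [h2] at h1
    have hmain : D (t + 1) ≤ D t - 2 * γ * (∫ ω, ⟪(w t ω - wstar), g t ω⟫ ∂P)
        + γ ^ 2 * (∫ ω, ‖g t ω‖ ^ 2 ∂P) := by
      have h1 : D (t + 1) ≤ ∫ ω, (‖(w t ω - wstar)‖ ^ 2 - 2 * γ * ⟪(w t ω - wstar), g t ω⟫
          + γ ^ 2 * ‖g t ω‖ ^ 2) ∂P :=
        integral_mono (hwsqint (t + 1)) hRHS_int hpoint
      have I1 : Integrable (fun ω => ‖(w t ω - wstar)‖ ^ 2 - 2 * γ * ⟪(w t ω - wstar), g t ω⟫) P := by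
        exact (hwsqint t).sub (hinner_int.const_mul (2 * γ))
      have I2 : Integrable (fun ω => γ ^ 2 * ‖g t ω‖ ^ 2) P := by
        exact (hgsqint t).const_mul (γ ^ 2)
      have I3 : Integrable (fun ω => 2 * γ * ⟪(w t ω - wstar), g t ω⟫) P := by
        exact hinner_int.const_mul (2 * γ)
      rw [integral_add I1 I2, integral_sub (hwsqint t) I3,
        integral_const_mul, integral_const_mul] at h1
      exact h1
    have h2γ : 0 ≤ 2 * γ := by linarith
    nlinarith [hDnonneg t, mul_le_mul_of_nonneg_left hinner_lb h2γ,
      mul_le_mul_of_nonneg_left hnoise_ub (sq_nonneg γ),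
      mul_le_mul_of_nonneg_right hγa (mul_nonneg hγ0.le (hDnonneg t))]
  -- induction
  intro T
  have hbterm : 0 ≤ 2 * γ * b / μ := by positivity
  show D T ≤ (1 - μ * γ / 2) ^ T * ‖w0 - wstar‖ ^ 2 + 2 * γ * b / μ
  induction T with
  | zero => rw [pow_zero, one_mul, hD0]; linarith
  | succ T ih =>
    have h1 : D (T + 1) ≤ (1 - μ * γ / 2) * D T + γ ^ 2 * b := hstep T
    have h2 : (1 - μ * γ / 2) * D T
        ≤ (1 - μ * γ / 2) * ((1 - μ * γ / 2) ^ T * ‖w0 - wstar‖ ^ 2 + 2 * γ * b / μ) :=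
      mul_le_mul_of_nonneg_left ih hq0
    have h3 : (1 - μ * γ / 2) * (2 * γ * b / μ) + γ ^ 2 * b = 2 * γ * b / μ := by
      field_simp
      ring
    calc D (T + 1) ≤ (1 - μ * γ / 2) * D T + γ ^ 2 * b := h1
      _ ≤ (1 - μ * γ / 2) * ((1 - μ * γ / 2) ^ T * ‖w0 - wstar‖ ^ 2 + 2 * γ * b / μ)
          + γ ^ 2 * b := by linarith
      _ = (1 - μ * γ / 2) ^ (T + 1) * ‖w0 - wstar‖ ^ 2
          + ((1 - μ * γ / 2) * (2 * γ * b / μ) + γ ^ 2 * b) := by ring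
      _ = (1 - μ * γ / 2) ^ (T + 1) * ‖w0 - wstar‖ ^ 2 + 2 * γ * b / μ := by rw [h3]
end

section
/- Let V be a linear subspace of the d×d real matrices and for w = (m, C) ∈ ℝ^d × V let T_w(u) = Cu + m. Suppose the map z ↦ log p(z, x) on ℝ^d is differentiable and M-smooth, with maximizer m̄; set w̄ = (m̄, 0). Define the entropy gradient estimator g_ent(u) = −∇_w log p(T_w(u), x) + ∇h(w), where h(m, C) = −log det C on {C positive definite} and ∇h(w) = (0, −proj_V(C^{−⊤})). Then for every L > 0, every w = (m, C) with C positive definite and σ_min(C) ≥ 1/√L, and every w* ∈ ℝ^d × V, E_{u ~ N(0,I_d)} ‖g_ent(u)‖² ≤ 2(d+3)M²‖w − w̄‖² + 2dL ≤ 4(d+3)M²‖w − w*‖² + 4(d+3)M²‖w* − w̄‖² + 2dL. -/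
open MeasureTheory ProbabilityTheory

noncomputable section

/-- The standard Gaussian measure `N(0, I_d)` on `ℝ^d` (as `EuclideanSpace ℝ (Fin d)`). -/
def stdGaussian (d : ℕ) : Measure (EuclideanSpace ℝ (Fin d)) :=
  Measure.map (MeasurableEquiv.toLp 2 (Fin d → ℝ))
    (Measure.pi fun _ : Fin d => gaussianReal 0 1)

/-- View an element of the Euclidean space indexed by `Fin d × Fin d` as a matrix. -/
def toMat {d : ℕ} (C : EuclideanSpace ℝ (Fin d × Fin d)) : Matrix (Fin d) (Fin d) ℝ :=
  Matrix.of fun i j => C (i, j)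

/-- View a matrix as an element of the Euclidean space indexed by `Fin d × Fin d`
(carrying the Frobenius inner product). -/
def ofMat {d : ℕ} (A : Matrix (Fin d) (Fin d) ℝ) : EuclideanSpace ℝ (Fin d × Fin d) :=
  WithLp.toLp 2 fun p : Fin d × Fin d => A p.1 p.2

/-- The action of a matrix on `EuclideanSpace ℝ (Fin d)`. -/
def mulVecE {d : ℕ} (A : Matrix (Fin d) (Fin d) ℝ) (v : EuclideanSpace ℝ (Fin d)) :
    EuclideanSpace ℝ (Fin d) :=
  WithLp.toLp 2 fun i => ∑ j, A i j * v j

/-- The affine reparameterization `T_w(u) = C u + m` for `w = (m, C) ∈ ℝ^d × V`. -/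
def repar {d : ℕ} (V : Submodule ℝ (EuclideanSpace ℝ (Fin d × Fin d)))
    (w : WithLp 2 (EuclideanSpace ℝ (Fin d) × V))
    (u : EuclideanSpace ℝ (Fin d)) : EuclideanSpace ℝ (Fin d) :=
  WithLp.toLp 2 fun i => (∑ j, (w.ofLp.2 : EuclideanSpace ℝ (Fin d × Fin d)) (i, j) * u j) + w.ofLp.1 i

/-- The gradient of the negative entropy, `∇h(w) = (0, −proj_V (C⁻ᵀ))`,
for `w = (m, C) ∈ ℝ^d × V`. -/
def entGrad {d : ℕ} (V : Submodule ℝ (EuclideanSpace ℝ (Fin d × Fin d)))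
    (w : WithLp 2 (EuclideanSpace ℝ (Fin d) × V)) :
    WithLp 2 (EuclideanSpace ℝ (Fin d) × V) :=
  WithLp.toLp 2 ((0, -(V.orthogonalProjectionOnto
      (ofMat (((toMat (w.ofLp.2 : EuclideanSpace ℝ (Fin d × Fin d))).transpose)⁻¹)))) :
    EuclideanSpace ℝ (Fin d) × V)


open Real Filter

namespace EntAux

/-- raw gaussian integral -/
def J (n : ℕ) : ℝ := ∫ x : ℝ, x ^ n * Real.exp (-2⁻¹ * x ^ 2)

lemma integrable_pow_exp (n : ℕ) :
    Integrable (fun x : ℝ => x ^ n * Real.exp (-2⁻¹ * x ^ 2)) := by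
  have h := integrable_rpow_mul_exp_neg_mul_sq (b := 2⁻¹) (by norm_num) (s := n)
    (lt_of_lt_of_le (by norm_num) (Nat.cast_nonneg n))
  simpa [Real.rpow_natCast] using h

lemma J_zero : J 0 = Real.sqrt (2 * π) := by
  have h := integral_gaussian 2⁻¹
  simp only [J, pow_zero, one_mul]
  rw [h, show ((π:ℝ) / 2⁻¹) = 2 * π by field_simp]

lemma J_odd (n : ℕ) (hn : Odd n) : J n = 0 := by
  have h : ∫ x : ℝ, (-x) ^ n * Real.exp (-2⁻¹ * (-x) ^ 2)
      = ∫ x : ℝ, x ^ n * Real.exp (-2⁻¹ * x ^ 2) := by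
    have hmp : MeasurePreserving (fun x : ℝ => -x) volume volume :=
      Measure.measurePreserving_neg volume
    exact hmp.integral_comp (Homeomorph.neg ℝ).isClosedEmbedding.measurableEmbedding (fun x : ℝ => x ^ n * Real.exp (-2⁻¹ * x ^ 2))
  have h3 : ∫ x : ℝ, (-x) ^ n * Real.exp (-2⁻¹ * (-x) ^ 2)
      = ∫ x : ℝ, -(x ^ n * Real.exp (-2⁻¹ * x ^ 2)) := by
    apply integral_congr_ae
    filter_upwards with x
    rw [hn.neg_pow, neg_sq]
    ring
  rw [h3, integral_neg] at h
  simp only [J]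
  linarith [h]

lemma tendsto_pow_exp_atTop (n : ℕ) :
    Tendsto (fun x : ℝ => x ^ n * Real.exp (-2⁻¹ * x ^ 2)) atTop (nhds 0) := by
  have h := rpow_mul_exp_neg_mul_sq_isLittleO_exp_neg (b := 2⁻¹) (by norm_num) (n : ℝ)
  have hx : Tendsto (fun x : ℝ => (1/2) * x) atTop atTop :=
    Tendsto.const_mul_atTop (by norm_num) tendsto_id
  have h2 : Tendsto (fun x : ℝ => Real.exp (-(1/2) * x)) atTop (nhds 0) := by
    have := Real.tendsto_exp_atBot.comp (tendsto_neg_atTop_atBot.comp hx)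
    simpa [Function.comp_def, neg_mul] using this
  have h3 := h.trans_tendsto h2
  have heq : (fun x : ℝ => x ^ (n : ℝ) * Real.exp (-2⁻¹ * x ^ 2)) =ᶠ[atTop]
      (fun x : ℝ => x ^ n * Real.exp (-2⁻¹ * x ^ 2)) := by
    filter_upwards with x
    rw [Real.rpow_natCast]
  exact h3.congr' heq

lemma tendsto_pow_exp_atBot (n : ℕ) :
    Tendsto (fun x : ℝ => x ^ n * Real.exp (-2⁻¹ * x ^ 2)) atBot (nhds 0) := by
  have h := (tendsto_pow_exp_atTop n).comp tendsto_neg_atBot_atTop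
  have heq : (fun x : ℝ => (-x) ^ n * Real.exp (-2⁻¹ * (-x) ^ 2))
      = fun x : ℝ => (-1)^n * (x ^ n * Real.exp (-2⁻¹ * x ^ 2)) := by
    funext x; rw [neg_pow]; ring_nf
  have h2 : Tendsto (fun x : ℝ => (-1:ℝ)^n * (x ^ n * Real.exp (-2⁻¹ * x ^ 2))) atBot (nhds 0) := by
    rw [← heq]; exact h
  have h3 := h2.const_mul ((-1:ℝ)^n)
  simp only [← mul_assoc, ← mul_pow, neg_mul_neg, one_mul, one_pow, mul_zero] at h3
  exact h3

lemma J_rec (n : ℕ) : J (n + 2) = (n + 1) * J n := by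
  set f : ℝ → ℝ := fun x => x ^ (n+1) * Real.exp (-2⁻¹ * x ^ 2) with hf
  set f' : ℝ → ℝ := fun x => (n+1) * (x ^ n * Real.exp (-2⁻¹ * x ^ 2))
      - x ^ (n+2) * Real.exp (-2⁻¹ * x ^ 2) with hf'
  have hderiv : ∀ x : ℝ, HasDerivAt f (f' x) x := by
    intro x
    have h1 : HasDerivAt (fun x : ℝ => x ^ (n+1)) ((n+1) * x ^ n) x := by
      simpa using hasDerivAt_pow (n+1) x
    have h2 : HasDerivAt (fun x : ℝ => Real.exp (-2⁻¹ * x ^ 2))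
        (Real.exp (-2⁻¹ * x ^ 2) * (-x)) x := by
      have h3 : HasDerivAt (fun x : ℝ => -2⁻¹ * x ^ 2) (-x) x := by
        have := (hasDerivAt_pow 2 x).const_mul (-2⁻¹ : ℝ)
        simpa using this.congr_deriv (by ring)
      exact (Real.hasDerivAt_exp _).comp x h3
    have := h1.fun_mul h2
    refine this.congr_deriv ?_
    show _ = (n+1) * (x ^ n * Real.exp (-2⁻¹ * x ^ 2)) - x ^ (n+2) * Real.exp (-2⁻¹ * x ^ 2)
    ring
  have hint : Integrable f' := by
    exact ((integrable_pow_exp n).const_mul _).sub (integrable_pow_exp (n+2))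
  have h0 := integral_of_hasDerivAt_of_tendsto hderiv hint
    (tendsto_pow_exp_atBot (n+1)) (tendsto_pow_exp_atTop (n+1))
  rw [sub_zero] at h0  -- (0 : ℝ) - 0
  have h1 : ∫ x, f' x = (n+1) * J n - J (n+2) := by
    rw [hf', integral_sub (((integrable_pow_exp n).const_mul _)) (integrable_pow_exp (n+2))]
    rw [integral_const_mul]
    rfl
  rw [h1] at h0
  linarith [h0]

lemma J_two : J 2 = Real.sqrt (2 * π) := by
  have := J_rec 0
  rw [J_zero] at this
  simpa using this

lemma J_four : J 4 = 3 * Real.sqrt (2 * π) := by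
  have h := J_rec 2
  rw [J_two] at h
  rw [h]
  norm_num

end EntAux

namespace EntAux

open scoped NNReal ENNReal

lemma pdf_eq : gaussianPDFReal 0 1 = fun x => (Real.sqrt (2*π))⁻¹ * Real.exp (-2⁻¹ * x^2) := by
  funext x
  simp only [gaussianPDFReal_def, NNReal.coe_one, mul_one, sub_zero]
  congr 1
  rw [neg_div]
  ring

lemma gauss_density (g : ℝ → ℝ) :
    ∫ x, g x ∂(gaussianReal 0 1)
      = ∫ x, gaussianPDFReal 0 1 x * g x := by
  rw [gaussianReal_of_var_ne_zero 0 one_ne_zero]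
  have : (gaussianPDF 0 1) = fun x => ((Real.toNNReal (gaussianPDFReal 0 1 x) : ℝ≥0) : ℝ≥0∞) := by
    funext x; rfl
  rw [this, integral_withDensity_eq_integral_smul
    ((measurable_gaussianPDFReal 0 1).real_toNNReal) g]
  congr 1
  funext x
  rw [NNReal.smul_def, smul_eq_mul, Real.coe_toNNReal _ (gaussianPDFReal_nonneg 0 1 x)]

lemma gauss_integrable (g : ℝ → ℝ) (hg : Measurable g)
    (h : Integrable (fun x => gaussianPDFReal 0 1 x * g x)) :
    Integrable g (gaussianReal 0 1) := by
  rw [gaussianReal_of_var_ne_zero 0 one_ne_zero]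
  have hd : (gaussianPDF 0 1) = fun x => ((Real.toNNReal (gaussianPDFReal 0 1 x) : ℝ≥0) : ℝ≥0∞) := by
    funext x; rfl
  rw [hd]
  refine (integrable_withDensity_iff_integrable_smul (E := ℝ) (μ := (volume : Measure ℝ))
    (g := g) ((measurable_gaussianPDFReal 0 1).real_toNNReal)).mpr ?_
  apply h.congr
  filter_upwards with x
  rw [NNReal.smul_def, smul_eq_mul, Real.coe_toNNReal _ (gaussianPDFReal_nonneg 0 1 x)]

lemma integrable_pow_gauss (n : ℕ) : Integrable (fun x : ℝ => x^n) (gaussianReal 0 1) := by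
  apply gauss_integrable _ (measurable_id.pow_const n)
  rw [pdf_eq]
  have := (integrable_pow_exp n).const_mul (Real.sqrt (2*π))⁻¹
  apply this.congr
  filter_upwards with x
  simp only [id_eq]
  ring

/-- the moments of the standard gaussian -/
def gmom (n : ℕ) : ℝ := ∫ x, x^n ∂(gaussianReal 0 1)

lemma gmom_eq (n : ℕ) : gmom n = (Real.sqrt (2*π))⁻¹ * J n := by
  rw [gmom, gauss_density, pdf_eq, J, ← integral_const_mul]
  congr 1; funext x; ring

lemma sqrt_two_pi_pos : 0 < Real.sqrt (2*π) := Real.sqrt_pos.mpr (by positivity)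

@[simp] lemma gmom_zero : gmom 0 = 1 := by
  rw [gmom_eq, J_zero, inv_mul_cancel₀ (ne_of_gt sqrt_two_pi_pos)]

@[simp] lemma gmom_one : gmom 1 = 0 := by rw [gmom_eq, J_odd 1 odd_one, mul_zero]

@[simp] lemma gmom_two : gmom 2 = 1 := by
  rw [gmom_eq, J_two, inv_mul_cancel₀ (ne_of_gt sqrt_two_pi_pos)]

@[simp] lemma gmom_three : gmom 3 = 0 := by
  rw [gmom_eq, J_odd 3 ⟨1, by norm_num⟩, mul_zero]

@[simp] lemma gmom_four : gmom 4 = 3 := by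
  rw [gmom_eq, J_four, ← mul_assoc, mul_comm _ (3:ℝ), mul_assoc,
    inv_mul_cancel₀ (ne_of_gt sqrt_two_pi_pos), mul_one]

end EntAux

namespace EntAux

/-- product of standard gaussians -/
def piG (d : ℕ) : Measure (Fin d → ℝ) := Measure.pi fun _ => gaussianReal 0 1

variable {d : ℕ}

instance : IsProbabilityMeasure (piG d) := by
  unfold piG; infer_instance

lemma integrable_monomial (e : Fin d → ℕ) :
    Integrable (fun x : Fin d → ℝ => ∏ i, x i ^ e i) (piG d) := by
  letI : MeasureSpace ℝ := ⟨gaussianReal 0 1⟩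
  haveI : SigmaFinite (volume : Measure ℝ) :=
    inferInstanceAs (SigmaFinite (gaussianReal 0 1))
  exact Integrable.fintype_prod (𝕜 := ℝ) (f := fun i (x : ℝ) => x ^ e i)
    (fun i => integrable_pow_gauss (e i))

lemma integral_monomial (e : Fin d → ℕ) :
    ∫ x, (∏ i, x i ^ e i) ∂(piG d) = ∏ i, gmom (e i) := by
  letI : MeasureSpace ℝ := ⟨gaussianReal 0 1⟩
  haveI : SigmaFinite (volume : Measure ℝ) :=
    inferInstanceAs (SigmaFinite (gaussianReal 0 1))
  exact integral_fintype_prod_eq_prod (𝕜 := ℝ) (fun i (x : ℝ) => x ^ e i)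

lemma prod_pow_ite (x : Fin d → ℝ) (j : Fin d) (a : ℕ) :
    (∏ i, x i ^ (if i = j then a else 0)) = x j ^ a := by
  have h : ∀ i, x i ^ (if i = j then a else 0) = (if i = j then x i ^ a else 1) := by
    intro i; split <;> simp
  simp only [h]
  rw [Finset.prod_ite_eq' Finset.univ j (fun i => x i ^ a)]
  simp

lemma mono1 (j : Fin d) : (fun x : Fin d → ℝ => x j)
    = fun x => ∏ i, x i ^ (if i = j then 1 else 0) := by
  funext x; rw [prod_pow_ite, pow_one]

lemma mono2 (j k : Fin d) : (fun x : Fin d → ℝ => x j * x k)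
    = fun x => ∏ i, x i ^ ((if i = j then 1 else 0) + (if i = k then 1 else 0)) := by
  funext x
  simp only [pow_add, Finset.prod_mul_distrib, prod_pow_ite, pow_one]

lemma mono3 (j l : Fin d) : (fun x : Fin d → ℝ => x j * (x l)^2)
    = fun x => ∏ i, x i ^ ((if i = j then 1 else 0) + (if i = l then 2 else 0)) := by
  funext x
  simp only [pow_add, Finset.prod_mul_distrib, prod_pow_ite, pow_one]

lemma mono4 (j k l : Fin d) : (fun x : Fin d → ℝ => x j * x k * (x l)^2)
    = fun x => ∏ i, x i ^ ((if i = j then 1 else 0) + (if i = k then 1 else 0)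
        + (if i = l then 2 else 0)) := by
  funext x
  simp only [pow_add, Finset.prod_mul_distrib, prod_pow_ite, pow_one]

-- integrability
lemma B1int (j k : Fin d) : Integrable (fun x : Fin d → ℝ => x j * x k) (piG d) := by
  rw [mono2]; exact integrable_monomial _

lemma B2int (j : Fin d) : Integrable (fun x : Fin d → ℝ => x j) (piG d) := by
  rw [mono1]; exact integrable_monomial _

lemma B3int (j k l : Fin d) :
    Integrable (fun x : Fin d → ℝ => x j * x k * (x l)^2) (piG d) := by
  rw [mono4]; exact integrable_monomial _

lemma B4int (j l : Fin d) : Integrable (fun x : Fin d → ℝ => x j * (x l)^2) (piG d) := by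
  rw [mono3]; exact integrable_monomial _

-- values
lemma B1val (j k : Fin d) :
    ∫ x, x j * x k ∂(piG d) = if j = k then 1 else 0 := by
  rw [mono2, integral_monomial]
  by_cases hjk : j = k
  · subst hjk
    simp only [if_pos rfl]
    apply Finset.prod_eq_one
    intro i _
    by_cases h : i = j <;> simp [h]
  · rw [if_neg hjk]
    apply Finset.prod_eq_zero (Finset.mem_univ j)
    simp [hjk]

lemma B2val (j : Fin d) : ∫ x, x j ∂(piG d) = 0 := by
  rw [mono1, integral_monomial]
  apply Finset.prod_eq_zero (Finset.mem_univ j)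
  simp

lemma B4val (j l : Fin d) : ∫ x, x j * (x l)^2 ∂(piG d) = 0 := by
  rw [mono3, integral_monomial]
  apply Finset.prod_eq_zero (Finset.mem_univ j)
  by_cases h : j = l <;> simp [h]

lemma B3val (j k l : Fin d) :
    ∫ x, x j * x k * (x l)^2 ∂(piG d)
      = if j = k then (if l = j then 3 else 1) else 0 := by
  rw [mono4, integral_monomial]
  by_cases hjk : j = k
  · subst hjk
    rw [if_pos rfl]
    by_cases hlj : l = j
    · subst hlj
      rw [if_pos rfl]
      have h : ∀ i : Fin d, gmom ((if i = l then 1 else 0) + (if i = l then 1 else 0)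
          + (if i = l then 2 else 0)) = (if i = l then 3 else 1) := by
        intro i; by_cases h : i = l <;> simp [h]
      simp only [h]
      rw [Finset.prod_ite_eq' Finset.univ l (fun _ => (3:ℝ))]
      simp
    · rw [if_neg hlj]
      apply Finset.prod_eq_one
      intro i _
      by_cases h1 : i = j
      · subst h1
        rw [if_pos rfl, if_neg (show ¬ i = l from fun h => hlj h.symm)]
        simp
      · rw [if_neg h1]
        by_cases h2 : i = l
        · rw [if_pos h2]; simp
        · rw [if_neg h2]; simp
  · rw [if_neg hjk]
    apply Finset.prod_eq_zero (Finset.mem_univ j)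
    rw [if_pos rfl, if_neg hjk]
    by_cases h2 : j = l
    · rw [if_pos h2]; simp
    · rw [if_neg h2]; simp

-- sums against ∑ l, (x l)^2
lemma sumsq_expand (j k : Fin d) :
    (fun x : Fin d → ℝ => x j * x k * ∑ l, (x l)^2)
      = fun x => ∑ l, x j * x k * (x l)^2 := by
  funext x; rw [Finset.mul_sum]

lemma Tint (j k : Fin d) :
    Integrable (fun x : Fin d → ℝ => x j * x k * ∑ l, (x l)^2) (piG d) := by
  rw [sumsq_expand]
  exact integrable_finset_sum _ (fun l _ => B3int j k l)

lemma Tval (j k : Fin d) :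
    ∫ x, x j * x k * ∑ l, (x l)^2 ∂(piG d)
      = if j = k then (d : ℝ) + 2 else 0 := by
  rw [sumsq_expand, integral_finset_sum _ (fun l _ => B3int j k l)]
  simp only [B3val]
  by_cases hjk : j = k
  · simp only [if_pos hjk]
    have h : ∀ l : Fin d, (if l = j then (3:ℝ) else 1) = (if l = j then 2 else 0) + 1 := by
      intro l; split <;> norm_num
    simp only [h]
    rw [Finset.sum_add_distrib, Finset.sum_ite_eq' Finset.univ j (fun _ => (2:ℝ))]
    simp only [Finset.mem_univ, if_pos, Finset.sum_const, Finset.card_univ, Fintype.card_fin,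
      nsmul_eq_mul, mul_one]
    ring
  · simp [hjk]

lemma sumsq_expand1 (j : Fin d) :
    (fun x : Fin d → ℝ => x j * ∑ l, (x l)^2)
      = fun x => ∑ l, x j * (x l)^2 := by
  funext x; rw [Finset.mul_sum]

lemma Sint (j : Fin d) :
    Integrable (fun x : Fin d → ℝ => x j * ∑ l, (x l)^2) (piG d) := by
  rw [sumsq_expand1]
  exact integrable_finset_sum _ (fun l _ => B4int j l)

lemma Sval (j : Fin d) :
    ∫ x, x j * ∑ l, (x l)^2 ∂(piG d) = 0 := by
  rw [sumsq_expand1, integral_finset_sum _ (fun l _ => B4int j l)]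
  simp only [B4val]
  simp

lemma Rint : Integrable (fun x : Fin d → ℝ => ∑ l, (x l)^2) (piG d) := by
  have h : (fun x : Fin d → ℝ => ∑ l, (x l)^2) = fun x => ∑ l, x l * x l := by
    funext x; congr 1; funext l; ring
  rw [h]
  exact integrable_finset_sum _ (fun l _ => B1int l l)

lemma Rval : ∫ x, ∑ l, (x l)^2 ∂(piG d) = (d : ℝ) := by
  have h : (fun x : Fin d → ℝ => ∑ l, (x l)^2) = fun x => ∑ l, x l * x l := by
    funext x; congr 1; funext l; ring
  rw [h, integral_finset_sum _ (fun l _ => B1int l l)]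
  simp only [B1val]
  simp

end EntAux

namespace EntAux

variable {d : ℕ}

lemma expand_sq (b : Fin d → ℝ) (c : ℝ) (x : Fin d → ℝ) :
    (∑ j, b j * x j + c)^2
      = (∑ j, ∑ k, (b j * b k) * (x j * x k)) + ((∑ j, (2 * c * b j) * x j) + c^2) := by
  have h1 : (∑ j, b j * x j)^2 = ∑ j, ∑ k, (b j * b k) * (x j * x k) := by
    rw [sq, Finset.sum_mul_sum]
    apply Finset.sum_congr rfl; intro j _
    apply Finset.sum_congr rfl; intro k _
    ring
  have h2 : 2 * (∑ j, b j * x j) * c = ∑ j, (2 * c * b j) * x j := by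
    rw [Finset.mul_sum, Finset.sum_mul]
    apply Finset.sum_congr rfl; intro j _
    ring
  rw [add_sq, h1, h2, add_assoc]

lemma expand_sq' (b : Fin d → ℝ) (c : ℝ) (x : Fin d → ℝ) :
    (∑ j, b j * x j + c)^2 * (∑ l, (x l)^2)
      = (∑ j, ∑ k, (b j * b k) * (x j * x k * ∑ l, (x l)^2))
          + ((∑ j, (2 * c * b j) * (x j * ∑ l, (x l)^2)) + c^2 * (∑ l, (x l)^2)) := by
  rw [expand_sq b c x, add_mul, add_mul, Finset.sum_mul, Finset.sum_mul]
  congr 1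
  · apply Finset.sum_congr rfl; intro j _
    rw [Finset.sum_mul]
    apply Finset.sum_congr rfl; intro k _
    ring
  · congr 1
    apply Finset.sum_congr rfl; intro j _
    ring

lemma key1_int (b : Fin d → ℝ) (c : ℝ) :
    Integrable (fun x : Fin d → ℝ => (∑ j, b j * x j + c)^2) (piG d) := by
  have h : (fun x : Fin d → ℝ => (∑ j, b j * x j + c)^2)
      = fun x => (∑ j, ∑ k, (b j * b k) * (x j * x k)) + ((∑ j, (2 * c * b j) * x j) + c^2) := by
    funext x; exact expand_sq b c x
  rw [h]
  have hI1 : Integrable (fun x : Fin d → ℝ => ∑ j, ∑ k, (b j * b k) * (x j * x k)) (piG d) :=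
    integrable_finset_sum _ (fun j _ => integrable_finset_sum _
      (fun k _ => (B1int j k).const_mul _))
  have hI2 : Integrable (fun x : Fin d → ℝ => ∑ j, (2 * c * b j) * x j) (piG d) :=
    integrable_finset_sum _ (fun j _ => (B2int j).const_mul _)
  exact hI1.add (hI2.add (integrable_const _))

lemma key1_val (b : Fin d → ℝ) (c : ℝ) :
    ∫ x, (∑ j, b j * x j + c)^2 ∂(piG d) = (∑ j, (b j)^2) + c^2 := by
  have h : (fun x : Fin d → ℝ => (∑ j, b j * x j + c)^2)
      = fun x => (∑ j, ∑ k, (b j * b k) * (x j * x k)) + ((∑ j, (2 * c * b j) * x j) + c^2) := by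
    funext x; exact expand_sq b c x
  have hI1 : Integrable (fun x : Fin d → ℝ => ∑ j, ∑ k, (b j * b k) * (x j * x k)) (piG d) :=
    integrable_finset_sum _ (fun j _ => integrable_finset_sum _
      (fun k _ => (B1int j k).const_mul _))
  have hI2 : Integrable (fun x : Fin d → ℝ => ∑ j, (2 * c * b j) * x j) (piG d) :=
    integrable_finset_sum _ (fun j _ => (B2int j).const_mul _)
  have hI3 : Integrable (fun x : Fin d → ℝ => (∑ j, (2 * c * b j) * x j) + c^2) (piG d) :=
    hI2.add (integrable_const _)
  rw [h, integral_add hI1 hI3, integral_add hI2 (integrable_const _),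
    integral_finset_sum _ (fun j _ => integrable_finset_sum _
      (fun k _ => (B1int j k).const_mul _)),
    integral_finset_sum _ (fun j _ => (B2int j).const_mul _)]
  simp only [integral_const_mul, B2val, mul_zero, Finset.sum_const_zero]
  rw [integral_const]
  simp only [measure_univ, probReal_univ, smul_eq_mul, one_mul, zero_add]
  congr 1
  have h2 : ∀ j, ∑ k, (b j * b k) * ∫ x, x j * x k ∂(piG d) = (b j)^2 := by
    intro j
    have h3 : ∀ k, (b j * b k) * ∫ x, x j * x k ∂(piG d)
        = if k = j then (b j)^2 else 0 := by
      intro k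
      rw [B1val]
      by_cases hk : k = j
      · subst hk; rw [if_pos rfl, if_pos rfl]; ring
      · rw [if_neg (fun h => hk h.symm), if_neg hk]; ring
    simp only [h3]
    rw [Finset.sum_ite_eq' Finset.univ j (fun _ => (b j)^2)]
    simp
  have h5 : ∀ j, ∫ x, (∑ k, (b j * b k) * (x j * x k)) ∂(piG d)
      = ∑ k, (b j * b k) * ∫ x, x j * x k ∂(piG d) := by
    intro j
    rw [integral_finset_sum _ (fun k _ => (B1int j k).const_mul _)]
    apply Finset.sum_congr rfl; intro k _
    rw [integral_const_mul]
  apply Finset.sum_congr rfl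
  intro j _
  rw [h5 j]
  exact h2 j

lemma key2_int (b : Fin d → ℝ) (c : ℝ) :
    Integrable
      (fun x : Fin d → ℝ => (∑ j, b j * x j + c)^2 * (∑ l, (x l)^2)) (piG d) := by
  have h : (fun x : Fin d → ℝ => (∑ j, b j * x j + c)^2 * (∑ l, (x l)^2))
      = fun x => (∑ j, ∑ k, (b j * b k) * (x j * x k * ∑ l, (x l)^2))
          + ((∑ j, (2 * c * b j) * (x j * ∑ l, (x l)^2)) + c^2 * (∑ l, (x l)^2)) := by
    funext x; exact expand_sq' b c x
  rw [h]
  have hI1 : Integrable (fun x : Fin d → ℝ =>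
      ∑ j, ∑ k, (b j * b k) * (x j * x k * ∑ l, (x l)^2)) (piG d) :=
    integrable_finset_sum _ (fun j _ => integrable_finset_sum _
      (fun k _ => (Tint j k).const_mul _))
  have hI2 : Integrable (fun x : Fin d → ℝ =>
      ∑ j, (2 * c * b j) * (x j * ∑ l, (x l)^2)) (piG d) :=
    integrable_finset_sum _ (fun j _ => (Sint j).const_mul _)
  exact hI1.add (hI2.add (Rint.const_mul _))

lemma key2_val (b : Fin d → ℝ) (c : ℝ) :
    ∫ x, (∑ j, b j * x j + c)^2 * (∑ l, (x l)^2) ∂(piG d)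
      = ((d : ℝ) + 2) * (∑ j, (b j)^2) + d * c^2 := by
  have h : (fun x : Fin d → ℝ => (∑ j, b j * x j + c)^2 * (∑ l, (x l)^2))
      = fun x => (∑ j, ∑ k, (b j * b k) * (x j * x k * ∑ l, (x l)^2))
          + ((∑ j, (2 * c * b j) * (x j * ∑ l, (x l)^2)) + c^2 * (∑ l, (x l)^2)) := by
    funext x; exact expand_sq' b c x
  have hI1 : Integrable (fun x : Fin d → ℝ =>
      ∑ j, ∑ k, (b j * b k) * (x j * x k * ∑ l, (x l)^2)) (piG d) :=
    integrable_finset_sum _ (fun j _ => integrable_finset_sum _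
      (fun k _ => (Tint j k).const_mul _))
  have hI2 : Integrable (fun x : Fin d → ℝ =>
      ∑ j, (2 * c * b j) * (x j * ∑ l, (x l)^2)) (piG d) :=
    integrable_finset_sum _ (fun j _ => (Sint j).const_mul _)
  have hI2' : Integrable (fun x : Fin d → ℝ => c^2 * (∑ l, (x l)^2)) (piG d) :=
    Rint.const_mul _
  have hI3 : Integrable (fun x : Fin d → ℝ =>
      (∑ j, (2 * c * b j) * (x j * ∑ l, (x l)^2)) + c^2 * (∑ l, (x l)^2)) (piG d) :=
    hI2.add hI2'
  rw [h, integral_add hI1 hI3, integral_add hI2 hI2',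
    integral_finset_sum _ (fun j _ => integrable_finset_sum _
      (fun k _ => (Tint j k).const_mul _)),
    integral_finset_sum _ (fun j _ => (Sint j).const_mul _)]
  simp only [integral_const_mul, Sval, mul_zero, Finset.sum_const_zero, Rval, zero_add]
  have h2 : ∀ j, ∑ k, (b j * b k) * ∫ x, x j * x k * ∑ l, (x l)^2 ∂(piG d)
      = ((d:ℝ) + 2) * (b j)^2 := by
    intro j
    have h3 : ∀ k, (b j * b k) * ∫ x, x j * x k * ∑ l, (x l)^2 ∂(piG d)
        = if k = j then ((d:ℝ)+2) * (b j)^2 else 0 := by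
      intro k
      rw [Tval]
      by_cases hk : k = j
      · subst hk; rw [if_pos rfl, if_pos rfl]; ring
      · rw [if_neg (fun h => hk h.symm), if_neg hk]; ring
    simp only [h3]
    rw [Finset.sum_ite_eq' Finset.univ j (fun _ => ((d:ℝ)+2) * (b j)^2)]
    simp
  have h4 : ∑ j, ∑ k, (b j * b k) * ∫ x, x j * x k * ∑ l, (x l)^2 ∂(piG d)
      = ((d:ℝ) + 2) * ∑ j, (b j)^2 := by
    rw [Finset.mul_sum]
    apply Finset.sum_congr rfl
    intro j _
    exact h2 j
  have h5 : ∀ j, ∫ x, (∑ k, (b j * b k) * (x j * x k * ∑ l, (x l)^2)) ∂(piG d)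
      = ∑ k, (b j * b k) * ∫ x, x j * x k * ∑ l, (x l)^2 ∂(piG d) := by
    intro j
    rw [integral_finset_sum _ (fun k _ => (Tint j k).const_mul _)]
    apply Finset.sum_congr rfl; intro k _
    rw [integral_const_mul]
  simp only [h5]
  rw [h4]
  ring

end EntAux

namespace EntAux

lemma normsq_eq {ι : Type*} [Fintype ι] (v : EuclideanSpace ℝ ι) :
    ‖v‖^2 = ∑ i, (v i)^2 := by
  rw [EuclideanSpace.norm_eq, Real.sq_sqrt (by positivity)]
  apply Finset.sum_congr rfl
  intro i _
  rw [Real.norm_eq_abs, sq_abs]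

lemma inv_frobenius_bound {d : ℕ} (L : ℝ) (hL : 0 < L) (C : Matrix (Fin d) (Fin d) ℝ)
    (hdet : IsUnit C.det)
    (hsig : ∀ v : EuclideanSpace ℝ (Fin d), 1 / Real.sqrt L * ‖v‖ ≤ ‖mulVecE C v‖) :
    ∑ i, ∑ j, ((C⁻¹) i j)^2 ≤ d * L := by
  have hs : 0 < Real.sqrt L := Real.sqrt_pos.mpr hL
  have hinv : ∀ v : EuclideanSpace ℝ (Fin d), ‖mulVecE C⁻¹ v‖ ≤ Real.sqrt L * ‖v‖ := by
    intro v
    have hc : mulVecE C (mulVecE C⁻¹ v) = v := by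
      show WithLp.toLp 2 (C.mulVec (C⁻¹.mulVec v.ofLp)) = v
      rw [Matrix.mulVec_mulVec, Matrix.mul_nonsing_inv _ hdet, Matrix.one_mulVec]
    have h := hsig (mulVecE C⁻¹ v)
    rw [hc] at h
    calc ‖mulVecE C⁻¹ v‖ = Real.sqrt L * (1 / Real.sqrt L * ‖mulVecE C⁻¹ v‖) := by
          field_simp
      _ ≤ Real.sqrt L * ‖v‖ := mul_le_mul_of_nonneg_left h hs.le
  rw [Finset.sum_comm]
  have hcol : ∀ j, ∑ i, ((C⁻¹) i j)^2 ≤ L := by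
    intro j
    have h1 : mulVecE C⁻¹ (EuclideanSpace.single j (1:ℝ)) = fun i => (C⁻¹) i j := by
      funext i
      simp only [mulVecE]
      have h2 : ∀ k, (C⁻¹) i k * (EuclideanSpace.single j (1:ℝ)) k
          = if k = j then (C⁻¹) i j else 0 := by
        intro k
        rw [EuclideanSpace.single_apply]
        by_cases h : k = j
        · subst h; simp
        · simp [h]
      simp only [h2]
      rw [Finset.sum_ite_eq' Finset.univ j (fun _ => (C⁻¹) i j)]
      simp
    have h3 := hinv (EuclideanSpace.single j (1:ℝ))
    rw [EuclideanSpace.norm_single, norm_one, mul_one] at h3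
    have h4 : ‖mulVecE C⁻¹ (EuclideanSpace.single j (1:ℝ))‖^2 ≤ L := by
      calc ‖mulVecE C⁻¹ (EuclideanSpace.single j (1:ℝ))‖^2
          ≤ (Real.sqrt L)^2 := pow_le_pow_left₀ (norm_nonneg _) h3 2
        _ = L := Real.sq_sqrt hL.le
    calc ∑ i, ((C⁻¹) i j)^2
        = ‖mulVecE C⁻¹ (EuclideanSpace.single j (1:ℝ))‖^2 := by
          rw [normsq_eq, h1]
      _ ≤ L := h4
  calc ∑ j, ∑ i, ((C⁻¹) i j)^2 ≤ ∑ _j : Fin d, L :=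
        Finset.sum_le_sum (fun j _ => hcol j)
    _ = d * L := by simp [mul_comm]

section Grad

variable {d : ℕ} (V : Submodule ℝ (EuclideanSpace ℝ (Fin d × Fin d)))
  (u : EuclideanSpace ℝ (Fin d))

/-- The linear map `w' ↦ T_{w'}(u)` for fixed `u`. -/
def BL : WithLp 2 (EuclideanSpace ℝ (Fin d) × V) →ₗ[ℝ] EuclideanSpace ℝ (Fin d) where
  toFun w' := repar V w' u
  map_add' a b := by
    ext i
    have h1 : (a + b).ofLp.1 = a.ofLp.1 + b.ofLp.1 := rfl
    have h2 : (((a + b).ofLp.2 : V) : EuclideanSpace ℝ (Fin d × Fin d))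
        = ((a.ofLp.2 : V) : EuclideanSpace ℝ (Fin d × Fin d)) + (b.ofLp.2 : V) := rfl
    show (∑ j, (((a+b).ofLp.2 : V) : EuclideanSpace ℝ (Fin d × Fin d)) (i, j) * u j) + (a+b).ofLp.1 i
      = ((∑ j, ((a.ofLp.2 : V) : EuclideanSpace ℝ (Fin d × Fin d)) (i, j) * u j) + a.ofLp.1 i)
        + ((∑ j, ((b.ofLp.2 : V) : EuclideanSpace ℝ (Fin d × Fin d)) (i, j) * u j) + b.ofLp.1 i)
    rw [h1, h2]
    simp only [PiLp.add_apply, add_mul, Finset.sum_add_distrib]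
    ring
  map_smul' c a := by
    ext i
    have h1 : (c • a).ofLp.1 = c • a.ofLp.1 := rfl
    have h2 : (((c • a).ofLp.2 : V) : EuclideanSpace ℝ (Fin d × Fin d))
        = c • ((a.ofLp.2 : V) : EuclideanSpace ℝ (Fin d × Fin d)) := rfl
    show (∑ j, (((c • a).ofLp.2 : V) : EuclideanSpace ℝ (Fin d × Fin d)) (i, j) * u j) + (c • a).ofLp.1 i
      = c • ((∑ j, ((a.ofLp.2 : V) : EuclideanSpace ℝ (Fin d × Fin d)) (i, j) * u j) + a.ofLp.1 i)
    rw [h1, h2]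
    simp only [PiLp.smul_apply, smul_eq_mul]
    rw [mul_add, Finset.mul_sum]
    congr 1
    apply Finset.sum_congr rfl; intro j _; ring

end Grad

end EntAux

set_option synthInstance.maxHeartbeats 1000000
namespace EntAux

section Grad2

variable {d : ℕ} {V : Submodule ℝ (EuclideanSpace ℝ (Fin d × Fin d))}
  (u : EuclideanSpace ℝ (Fin d))

/-- `BL` as a continuous linear map. -/
def BC (V : Submodule ℝ (EuclideanSpace ℝ (Fin d × Fin d)))
    (u : EuclideanSpace ℝ (Fin d)) :
    WithLp 2 (EuclideanSpace ℝ (Fin d) × V) →L[ℝ] EuclideanSpace ℝ (Fin d) :=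
  haveI : FiniteDimensional ℝ (WithLp 2 (EuclideanSpace ℝ (Fin d) × V)) :=
    inferInstance
  LinearMap.toContinuousLinearMap (BL V u)

lemma proj_inner (A : EuclideanSpace ℝ (Fin d × Fin d)) (b : V) :
    (inner ℝ ((V.orthogonalProjectionOnto A : V) : EuclideanSpace ℝ (Fin d × Fin d))
      ((b : V) : EuclideanSpace ℝ (Fin d × Fin d)) : ℝ)
    = inner ℝ A ((b : V) : EuclideanSpace ℝ (Fin d × Fin d)) := by
  have h0 := V.starProjection_inner_eq_zero A
    ((b : V) : EuclideanSpace ℝ (Fin d × Fin d)) b.2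
  rw [inner_sub_left, ← Submodule.coe_orthogonalProjectionOnto_apply] at h0
  linarith

lemma grad_repar_eq (logp : EuclideanSpace ℝ (Fin d) → ℝ)
    (glp : EuclideanSpace ℝ (Fin d) → EuclideanSpace ℝ (Fin d))
    (hdiff : ∀ z, HasGradientAt logp (glp z) z)
    (w : WithLp 2 (EuclideanSpace ℝ (Fin d) × V)) :
    gradient (fun w' => -(logp (repar V w' u))) w =
      (WithLp.toLp 2 ((-(glp (repar V w u)),
        -(V.orthogonalProjectionOnto (ofMat (Matrix.vecMulVec (glp (repar V w u)) u)))) :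
        EuclideanSpace ℝ (Fin d) × V)) := by
  set z := repar V w u with hz
  set g := glp z with hg
  set G : WithLp 2 (EuclideanSpace ℝ (Fin d) × V) :=
    (WithLp.toLp 2 ((-g, -(V.orthogonalProjectionOnto (ofMat (Matrix.vecMulVec g u)))) :
      EuclideanSpace ℝ (Fin d) × V)) with hG
  have h1 : HasFDerivAt logp ((InnerProductSpace.toDual ℝ _) g) z :=
    hasGradientAt_iff_hasFDerivAt.mp (hdiff z)
  have hcoe : ⇑(BC V u) = fun w' : WithLp 2 (EuclideanSpace ℝ (Fin d) × V) => repar V w' u := by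
    rw [BC, LinearMap.coe_toContinuousLinearMap']
    rfl
  have h2 : HasFDerivAt (fun w' : WithLp 2 (EuclideanSpace ℝ (Fin d) × V) => repar V w' u)
      (BC V u) w := by
    rw [← hcoe]
    exact (BC V u).hasFDerivAt
  have h3 : HasFDerivAt (fun w' : WithLp 2 (EuclideanSpace ℝ (Fin d) × V) =>
      -(logp (repar V w' u)))
      (-((((InnerProductSpace.toDual ℝ _) g).comp (BC V u)))) w := (h1.comp w h2).neg
  have h4 : HasGradientAt (fun w' : WithLp 2 (EuclideanSpace ℝ (Fin d) × V) =>
      -(logp (repar V w' u))) G w := by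
    rw [hasGradientAt_iff_hasFDerivAt]
    have key : (InnerProductSpace.toDual ℝ _) G
        = -((((InnerProductSpace.toDual ℝ _) g).comp (BC V u))) := by
      apply ContinuousLinearMap.ext
      intro y
      simp only [InnerProductSpace.toDual_apply_apply, ContinuousLinearMap.neg_apply,
        ContinuousLinearMap.comp_apply]
      have hBCy : (BC V u) y = repar V y u := by
        rw [show ((BC V u) y) = (⇑(BC V u)) y from rfl, hcoe]
      rw [hBCy]
      rw [WithLp.prod_inner_apply]
      have hG1 : G.ofLp.1 = -g := rfl
      have hG2 : ((G.ofLp.2 : V) : EuclideanSpace ℝ (Fin d × Fin d))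
          = -((V.orthogonalProjectionOnto (ofMat (Matrix.vecMulVec g u)) : V) :
              EuclideanSpace ℝ (Fin d × Fin d)) := rfl
      rw [hG1, inner_neg_left]
      rw [Submodule.coe_inner, hG2, inner_neg_left, proj_inner]
      simp only [PiLp.inner_apply, RCLike.inner_apply, conj_trivial]
      have hrepar : ∀ i, (repar V y u) i
          = (∑ j, ((y.ofLp.2 : V) : EuclideanSpace ℝ (Fin d × Fin d)) (i, j) * u j) + y.ofLp.1 i := by
        intro i; rfl
      have hofmat : ∀ p : Fin d × Fin d,
          (ofMat (Matrix.vecMulVec g u)) p = g p.1 * u p.2 := by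
        intro p; rfl
      simp only [hrepar, hofmat]
      rw [Fintype.sum_prod_type]
      have hexp : ∀ i, g i * ((∑ j, ((y.ofLp.2 : V) : EuclideanSpace ℝ (Fin d × Fin d)) (i, j) * u j)
            + y.ofLp.1 i)
          = (∑ j, (g i * u j) * ((y.ofLp.2 : V) : EuclideanSpace ℝ (Fin d × Fin d)) (i, j))
            + g i * y.ofLp.1 i := by
        intro i
        rw [mul_add, Finset.mul_sum]
        congr 1
        apply Finset.sum_congr rfl; intro j _; ring
      simp only [hexp, Finset.sum_add_distrib, neg_add]
      simp only [add_mul, Finset.sum_add_distrib, Finset.sum_mul, neg_add, mul_assoc,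
        mul_comm (u.ofLp _) (g.ofLp _)]
      ring
    rw [key]
    exact h3
  exact h4.gradient

end Grad2

end EntAux

set_option maxHeartbeats 1000000

namespace EntAux

section Point

variable {d : ℕ} {V : Submodule ℝ (EuclideanSpace ℝ (Fin d × Fin d))}

lemma proj_norm_le (a : EuclideanSpace ℝ (Fin d × Fin d)) :
    ‖((V.orthogonalProjectionOnto a : V) : EuclideanSpace ℝ (Fin d × Fin d))‖ ≤ ‖a‖ := by
  rw [← Submodule.coe_norm]
  calc ‖V.orthogonalProjectionOnto a‖ ≤ ‖V.orthogonalProjectionOnto‖ * ‖a‖ :=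
        (V.orthogonalProjectionOnto).le_opNorm a
    _ ≤ 1 * ‖a‖ := mul_le_mul_of_nonneg_right (V.orthogonalProjectionOnto_norm_le) (norm_nonneg a)
    _ = ‖a‖ := one_mul _

lemma pointwise_bound (M L : ℝ) (hM : 0 < M) (hL : 0 < L)
    (glp : EuclideanSpace ℝ (Fin d) → EuclideanSpace ℝ (Fin d))
    (mbar : EuclideanSpace ℝ (Fin d)) (hglp0 : glp mbar = 0)
    (hsmooth : ∀ z z', ‖glp z - glp z'‖ ≤ M * ‖z - z'‖)
    (w : WithLp 2 (EuclideanSpace ℝ (Fin d) × V))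
    (hCpos : (toMat (w.ofLp.2 : EuclideanSpace ℝ (Fin d × Fin d))).PosDef)
    (hCsig : ∀ v : EuclideanSpace ℝ (Fin d),
      1 / Real.sqrt L * ‖v‖ ≤ ‖mulVecE (toMat (w.ofLp.2 : EuclideanSpace ℝ (Fin d × Fin d))) v‖)
    (u : EuclideanSpace ℝ (Fin d))
    (G : WithLp 2 (EuclideanSpace ℝ (Fin d) × V))
    (hGeq : G = (WithLp.toLp 2 ((-(glp (repar V w u)),
        -(V.orthogonalProjectionOnto (ofMat (Matrix.vecMulVec (glp (repar V w u)) u)))) :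
        EuclideanSpace ℝ (Fin d) × V))) :
    ‖G + entGrad V w‖ ^ 2
      ≤ M^2 * ((∑ i, (∑ j, (toMat (w.ofLp.2 : EuclideanSpace ℝ (Fin d × Fin d))) i j * u j
            + (w.ofLp.1 i - mbar i))^2) * (1 + 2 * ∑ l, (u l)^2)) + 2*((d : ℝ)*L) := by
  set C := toMat (w.ofLp.2 : EuclideanSpace ℝ (Fin d × Fin d)) with hC
  set z := repar V w u with hzdef
  set g := glp z with hgdef
  set A1 := ofMat (Matrix.vecMulVec g u) with hA1def
  set A2 := ofMat ((C.transpose)⁻¹) with hA2def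
  subst hGeq
  set G : WithLp 2 (EuclideanSpace ℝ (Fin d) × V) :=
    (WithLp.toLp 2 ((-g, -(V.orthogonalProjectionOnto A1)) : EuclideanSpace ℝ (Fin d) × V)) with hGdef
  -- component computation
  have hfst : (G + entGrad V w).fst = -g := by
    show -g + 0 = -g
    rw [add_zero]
  have hsnd : (G + entGrad V w).snd
      = -(V.orthogonalProjectionOnto A1 + V.orthogonalProjectionOnto A2) := by
    show -(V.orthogonalProjectionOnto A1) + -(V.orthogonalProjectionOnto A2) = _
    rw [neg_add]
  have hnormsq : ‖G + entGrad V w‖^2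
      = ‖g‖^2 + ‖V.orthogonalProjectionOnto A1 + V.orthogonalProjectionOnto A2‖^2 := by
    rw [WithLp.prod_norm_sq_eq_of_L2, hfst, hsnd, norm_neg, norm_neg]
  -- projection bound
  have hproj : ‖V.orthogonalProjectionOnto A1 + V.orthogonalProjectionOnto A2‖ ≤ ‖A1‖ + ‖A2‖ := by
    rw [← map_add]
    calc ‖V.orthogonalProjectionOnto (A1 + A2)‖
        = ‖((V.orthogonalProjectionOnto (A1 + A2) : V) : EuclideanSpace ℝ (Fin d × Fin d))‖ :=
          Submodule.coe_norm _
      _ ≤ ‖A1 + A2‖ := proj_norm_le _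
      _ ≤ ‖A1‖ + ‖A2‖ := norm_add_le _ _
  -- A1 norm
  have hA1 : ‖A1‖^2 = ‖g‖^2 * ‖u‖^2 := by
    rw [hA1def, normsq_eq, normsq_eq, normsq_eq, Fintype.sum_prod_type, Finset.sum_mul_sum]
    apply Finset.sum_congr rfl; intro i _
    apply Finset.sum_congr rfl; intro j _
    show (g i * u j)^2 = (g i)^2 * (u j)^2
    ring
  -- A2 norm
  have hdet : IsUnit C.det := isUnit_iff_ne_zero.mpr (ne_of_gt hCpos.det_pos)
  have hA2 : ‖A2‖^2 ≤ (d : ℝ) * L := by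
    rw [hA2def, normsq_eq, Fintype.sum_prod_type]
    have hT : ∀ i j, ((C.transpose)⁻¹) i j = (C⁻¹) j i := by
      intro i j
      rw [← Matrix.transpose_nonsing_inv, Matrix.transpose_apply]
    calc ∑ i, ∑ j, (((ofMat ((C.transpose)⁻¹)) (i, j)))^2
        = ∑ i, ∑ j, ((C⁻¹) j i)^2 := by
          apply Finset.sum_congr rfl; intro i _
          apply Finset.sum_congr rfl; intro j _
          rw [show (ofMat ((C.transpose)⁻¹)) (i, j) = ((C.transpose)⁻¹) i j from rfl, hT]
      _ = ∑ j, ∑ i, ((C⁻¹) j i)^2 := Finset.sum_comm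
      _ ≤ (d : ℝ) * L := inv_frobenius_bound L hL C hdet hCsig
  -- gradient norm bound
  have hg : ‖g‖ ≤ M * ‖z - mbar‖ := by
    have := hsmooth z mbar
    rwa [hglp0, sub_zero] at this
  have hgsq : ‖g‖^2 ≤ M^2 * ‖z - mbar‖^2 := by
    calc ‖g‖^2 ≤ (M * ‖z - mbar‖)^2 := pow_le_pow_left₀ (norm_nonneg _) hg 2
      _ = M^2 * ‖z - mbar‖^2 := by ring
  -- z - mbar coordinates
  have hzm : ‖z - mbar‖^2 = ∑ i, (∑ j, C i j * u j + (w.ofLp.1 i - mbar i))^2 := by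
    rw [normsq_eq]
    apply Finset.sum_congr rfl; intro i _
    congr 1
    show z i - mbar i = _
    have hzi : z i = (∑ j, (w.ofLp.2 : EuclideanSpace ℝ (Fin d × Fin d)) (i, j) * u j) + w.ofLp.1 i := rfl
    rw [hzi]
    have hCij : ∀ j, C i j = (w.ofLp.2 : EuclideanSpace ℝ (Fin d × Fin d)) (i, j) := fun j => rfl
    simp only [hCij]
    ring
  have husq : ‖u‖^2 = ∑ l, (u l)^2 := normsq_eq u
  -- put it together
  have hfinal : ‖G + entGrad V w‖^2
      ≤ ‖g‖^2 + (2 * ‖A1‖^2 + 2 * ‖A2‖^2) := by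
    rw [hnormsq]
    have h1 : ‖V.orthogonalProjectionOnto A1 + V.orthogonalProjectionOnto A2‖^2
        ≤ (‖A1‖ + ‖A2‖)^2 := pow_le_pow_left₀ (norm_nonneg _) hproj 2
    nlinarith [h1, sq_nonneg (‖A1‖ - ‖A2‖)]
  calc ‖G + entGrad V w‖^2 ≤ ‖g‖^2 + (2 * ‖A1‖^2 + 2 * ‖A2‖^2) := hfinal
    _ ≤ M^2 * ‖z - mbar‖^2 + 2 * (M^2 * ‖z - mbar‖^2 * ‖u‖^2) + 2 * ((d:ℝ) * L) := by
        rw [hA1]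
        nlinarith [norm_nonneg u, sq_nonneg ‖u‖, norm_nonneg z, hgsq, hA2,
          mul_le_mul_of_nonneg_right hgsq (sq_nonneg ‖u‖)]
    _ = M^2 * (‖z - mbar‖^2 * (1 + 2 * ‖u‖^2)) + 2 * ((d:ℝ) * L) := by ring
    _ = M^2 * ((∑ i, (∑ j, C i j * u j + (w.ofLp.1 i - mbar i))^2) * (1 + 2 * ∑ l, (u l)^2))
          + 2*((d : ℝ)*L) := by rw [hzm, husq]

end Point

section Phi

variable {d : ℕ}

lemma keyphi_expand (Cm : Fin d → Fin d → ℝ) (δ : Fin d → ℝ) :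
    (fun x : Fin d → ℝ =>
      (∑ i, (∑ j, Cm i j * x j + δ i)^2) * (1 + 2 * ∑ l, (x l)^2))
      = fun x => (∑ i, (∑ j, Cm i j * x j + δ i)^2)
          + 2 * (∑ i, (∑ j, Cm i j * x j + δ i)^2 * (∑ l, (x l)^2)) := by
  funext x
  rw [mul_add, mul_one]
  congr 1
  rw [show (∑ i, (∑ j, Cm i j * x j + δ i)^2) * (2 * ∑ l, (x l)^2)
      = 2 * ((∑ i, (∑ j, Cm i j * x j + δ i)^2) * ∑ l, (x l)^2) from by ring,
    Finset.sum_mul]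

lemma keyphi_int (Cm : Fin d → Fin d → ℝ) (δ : Fin d → ℝ) :
    Integrable (fun x : Fin d → ℝ =>
      (∑ i, (∑ j, Cm i j * x j + δ i)^2) * (1 + 2 * ∑ l, (x l)^2)) (piG d) := by
  rw [keyphi_expand]
  exact (integrable_finset_sum _ (fun i _ => key1_int (fun j => Cm i j) (δ i))).add
    ((integrable_finset_sum _ (fun i _ => key2_int (fun j => Cm i j) (δ i))).const_mul 2)

lemma keyphi_val (Cm : Fin d → Fin d → ℝ) (δ : Fin d → ℝ) :
    ∫ x, (∑ i, (∑ j, Cm i j * x j + δ i)^2) * (1 + 2 * ∑ l, (x l)^2) ∂(piG d)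
      = (∑ i, ((∑ j, (Cm i j)^2) + (δ i)^2))
        + 2 * ∑ i, (((d:ℝ) + 2) * (∑ j, (Cm i j)^2) + (d:ℝ) * (δ i)^2) := by
  rw [keyphi_expand]
  have hI1 : Integrable (fun x : Fin d → ℝ =>
      ∑ i, (∑ j, Cm i j * x j + δ i)^2) (piG d) :=
    integrable_finset_sum _ (fun i _ => key1_int (fun j => Cm i j) (δ i))
  have hI2 : Integrable (fun x : Fin d → ℝ =>
      ∑ i, (∑ j, Cm i j * x j + δ i)^2 * (∑ l, (x l)^2)) (piG d) :=
    integrable_finset_sum _ (fun i _ => key2_int (fun j => Cm i j) (δ i))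
  have hI2' : Integrable (fun x : Fin d → ℝ =>
      2 * ∑ i, (∑ j, Cm i j * x j + δ i)^2 * (∑ l, (x l)^2)) (piG d) := hI2.const_mul 2
  rw [integral_add hI1 hI2', integral_const_mul,
    integral_finset_sum _ (fun i _ => key1_int (fun j => Cm i j) (δ i)),
    integral_finset_sum _ (fun i _ => key2_int (fun j => Cm i j) (δ i))]
  congr 1
  · apply Finset.sum_congr rfl; intro i _
    exact key1_val (fun j => Cm i j) (δ i)
  · congr 1
    apply Finset.sum_congr rfl; intro i _
    exact key2_val (fun j => Cm i j) (δ i)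

end Phi

end EntAux

open EntAux in
/-- **Noise bound for the entropy gradient estimator.**
If `z ↦ log p(z, x)` is differentiable, `M`-smooth and maximal at `m̄`, then for every
`L > 0`, every `w = (m, C) ∈ ℝ^d × V` with `C ≻ 0` and `σ_min(C) ≥ 1/√L`, and every `w*`,
the estimator `g_ent(u) = −∇_w log p(T_w(u), x) + ∇h(w)` with `u ~ N(0, I_d)` satisfies
`E‖g_ent‖² ≤ 2(d+3)M²‖w − w̄‖² + 2dL ≤ 4(d+3)M²‖w − w*‖² + 4(d+3)M²‖w* − w̄‖² + 2dL`,
where `w̄ = (m̄, 0)`. -/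
theorem entropy_estimator_noise_bound
    (d : ℕ) (M L : ℝ) (hM : 0 < M) (hL : 0 < L)
    (V : Submodule ℝ (EuclideanSpace ℝ (Fin d × Fin d)))
    (logp : EuclideanSpace ℝ (Fin d) → ℝ)
    (glp : EuclideanSpace ℝ (Fin d) → EuclideanSpace ℝ (Fin d))
    -- `log p(·, x)` is differentiable with gradient `glp` and `M`-smooth
    (hdiff : ∀ z, HasGradientAt logp (glp z) z)
    (hsmooth : ∀ z z', ‖glp z - glp z'‖ ≤ M * ‖z - z'‖)
    -- `log p(·, x)` is maximal at `m̄`, and `w̄ = (m̄, 0)`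
    (mbar : EuclideanSpace ℝ (Fin d)) (hmax : ∀ z, logp z ≤ logp mbar)
    (wbar : WithLp 2 (EuclideanSpace ℝ (Fin d) × V))
    (hwbar : wbar = WithLp.toLp 2 ((mbar, 0) : EuclideanSpace ℝ (Fin d) × V))
    (w wstar : WithLp 2 (EuclideanSpace ℝ (Fin d) × V))
    -- `w ∈ 𝒲_L` : the covariance factor `C` is positive definite with `σ_min(C) ≥ 1/√L`
    (hCpos : (toMat (w.ofLp.2 : EuclideanSpace ℝ (Fin d × Fin d))).PosDef)
    (hCsig : ∀ v : EuclideanSpace ℝ (Fin d),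
      1 / Real.sqrt L * ‖v‖ ≤ ‖mulVecE (toMat (w.ofLp.2 : EuclideanSpace ℝ (Fin d × Fin d))) v‖) :
    (∫ u, ‖gradient (fun w' => -(logp (repar V w' u))) w + entGrad V w‖ ^ 2 ∂(stdGaussian d)
        ≤ 2 * ((d : ℝ) + 3) * M ^ 2 * ‖w - wbar‖ ^ 2 + 2 * d * L)
    ∧ 2 * ((d : ℝ) + 3) * M ^ 2 * ‖w - wbar‖ ^ 2 + 2 * d * L
        ≤ 4 * ((d : ℝ) + 3) * M ^ 2 * ‖w - wstar‖ ^ 2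
          + 4 * ((d : ℝ) + 3) * M ^ 2 * ‖wstar - wbar‖ ^ 2 + 2 * d * L := by
  constructor
  · -- main bound
    -- gradient vanishes at the maximizer
    have hglp0 : glp mbar = 0 := by
      have hloc : IsLocalMax logp mbar := Filter.Eventually.of_forall hmax
      have hfd : HasFDerivAt logp ((InnerProductSpace.toDual ℝ _) (glp mbar)) mbar :=
        hasGradientAt_iff_hasFDerivAt.mp (hdiff mbar)
      have hz := hloc.hasFDerivAt_eq_zero hfd
      have := congrArg (InnerProductSpace.toDual ℝ (EuclideanSpace ℝ (Fin d))).symm hz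
      simpa using this
    set C := toMat (w.ofLp.2 : EuclideanSpace ℝ (Fin d × Fin d)) with hC
    set δE : Fin d → ℝ := fun i => w.ofLp.1 i - mbar i with hδ
    set F : EuclideanSpace ℝ (Fin d) → ℝ := fun u =>
      M^2 * ((∑ i, (∑ j, C i j * u j + δE i)^2) * (1 + 2 * ∑ l, (u l)^2)) + 2*((d : ℝ)*L)
      with hF
    -- rewrite the integrand using the gradient identity
    set Gfun : EuclideanSpace ℝ (Fin d) → WithLp 2 (EuclideanSpace ℝ (Fin d) × V) :=
      fun u => (WithLp.toLp 2 ((-(glp (repar V w u)),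
        -(V.orthogonalProjectionOnto (ofMat (Matrix.vecMulVec (glp (repar V w u)) u)))) :
        EuclideanSpace ℝ (Fin d) × V)) with hGfun
    have hcongr : ∫ u, ‖gradient (fun w' => -(logp (repar V w' u))) w + entGrad V w‖ ^ 2
          ∂(stdGaussian d)
        = ∫ u, ‖Gfun u + entGrad V w‖ ^ 2 ∂(stdGaussian d) := by
      apply integral_congr_ae
      filter_upwards with u
      rw [grad_repar_eq u logp glp hdiff w]
    -- transfer of the dominating function
    have hFcomp : (F ∘ (MeasurableEquiv.toLp 2 (Fin d → ℝ)))
        = fun x : Fin d → ℝ =>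
          M^2 * ((∑ i, (∑ j, C i j * x j + δE i)^2) * (1 + 2 * ∑ l, (x l)^2)) + 2*((d:ℝ)*L) := by
      funext x
      rfl
    have hFint : Integrable F (stdGaussian d) := by
      rw [_root_.stdGaussian, integrable_map_equiv]
      rw [hFcomp]
      exact ((keyphi_int (fun i j => C i j) δE).const_mul _).add (integrable_const _)
    haveI : IsProbabilityMeasure (piG d) := inferInstance
    have hFval : ∫ u, F u ∂(stdGaussian d)
        = M^2 * ((∑ i, ((∑ j, (C i j)^2) + (δE i)^2))
            + 2 * ∑ i, (((d:ℝ) + 2) * (∑ j, (C i j)^2) + (d:ℝ) * (δE i)^2)) + 2*((d:ℝ)*L) := by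
      rw [_root_.stdGaussian, integral_map_equiv]
      have hFcomp' : ∀ x : Fin d → ℝ, F ((MeasurableEquiv.toLp 2 (Fin d → ℝ)) x)
          = M^2 * ((∑ i, (∑ j, C i j * x j + δE i)^2) * (1 + 2 * ∑ l, (x l)^2)) + 2*((d:ℝ)*L) :=
        fun x => rfl
      simp only [hFcomp']
      have hpi : (Measure.pi fun _ : Fin d => gaussianReal 0 1) = piG d := rfl
      rw [hpi]
      have h1 : (fun x : Fin d → ℝ =>
          M^2 * ((∑ i, (∑ j, C i j * x j + δE i)^2) * (1 + 2 * ∑ l, (x l)^2)) + 2*((d:ℝ)*L))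
          = fun x => M^2 * ((∑ i, (∑ j, C i j * x j + δE i)^2) * (1 + 2 * ∑ l, (x l)^2))
              + 2*((d:ℝ)*L) := rfl
      rw [h1, integral_add ((keyphi_int (fun i j => C i j) δE).const_mul _) (integrable_const _),
        integral_const_mul]
      have h2 : ∫ x : Fin d → ℝ,
          (∑ i, (∑ j, C i j * x j + δE i)^2) * (1 + 2 * ∑ l, (x l)^2)
            ∂(piG d)
          = (∑ i, ((∑ j, (C i j)^2) + (δE i)^2))
            + 2 * ∑ i, (((d:ℝ) + 2) * (∑ j, (C i j)^2) + (d:ℝ) * (δE i)^2) :=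
        keyphi_val (fun i j => C i j) δE
      rw [h2, integral_const]
      simp
    -- pointwise bound
    have hpt : ∀ u : EuclideanSpace ℝ (Fin d),
        ‖Gfun u + entGrad V w‖ ^ 2 ≤ F u := by
      intro u
      exact pointwise_bound M L hM hL glp mbar hglp0 hsmooth w hCpos hCsig u _ rfl
    have hmono : ∫ u, ‖Gfun u + entGrad V w‖ ^ 2 ∂(stdGaussian d)
        ≤ ∫ u, F u ∂(stdGaussian d) := by
      apply integral_mono_of_nonneg
      · filter_upwards with u
        positivity
      · exact hFint
      · filter_upwards with u
        exact hpt u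
    -- norm of w - wbar
    have hwnorm : ‖w - wbar‖^2
        = (∑ i, (δE i)^2) + (∑ i, ∑ j, (C i j)^2) := by
      rw [WithLp.prod_norm_sq_eq_of_L2]
      congr 1
      · have hc1 : (w - wbar).fst = w.ofLp.1 - mbar := by rw [hwbar]; rfl
        rw [hc1, normsq_eq]
        apply Finset.sum_congr rfl; intro i _
        rfl
      · have hc2 : (w - wbar).snd = w.ofLp.2 := by
          rw [hwbar]
          show w.ofLp.2 - 0 = w.ofLp.2
          rw [sub_zero]
        rw [hc2, Submodule.coe_norm, normsq_eq, Fintype.sum_prod_type]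
        rfl
    -- final arithmetic
    have hS : 0 ≤ ∑ i, ∑ j, (C i j)^2 := by positivity
    have hD : 0 ≤ ∑ i, (δE i)^2 := by positivity
    have hMsq : 0 < M^2 := by positivity
    have hdnn : 0 ≤ (d:ℝ) := Nat.cast_nonneg d
    calc ∫ u, ‖gradient (fun w' => -(logp (repar V w' u))) w + entGrad V w‖ ^ 2
          ∂(stdGaussian d)
        ≤ ∫ u, F u ∂(stdGaussian d) := by rw [hcongr]; exact hmono
      _ = M^2 * ((∑ i, ((∑ j, (C i j)^2) + (δE i)^2))
            + 2 * ∑ i, (((d:ℝ) + 2) * (∑ j, (C i j)^2) + (d:ℝ) * (δE i)^2)) + 2*((d:ℝ)*L) :=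
          hFval
      _ ≤ 2 * ((d : ℝ) + 3) * M ^ 2 * ((∑ i, (δE i)^2) + (∑ i, ∑ j, (C i j)^2)) + 2 * d * L := by
          have he1 : ∑ i, ((∑ j, (C i j)^2) + (δE i)^2)
              = (∑ i, ∑ j, (C i j)^2) + ∑ i, (δE i)^2 := Finset.sum_add_distrib
          have he2 : ∑ i, (((d:ℝ) + 2) * (∑ j, (C i j)^2) + (d:ℝ) * (δE i)^2)
              = ((d:ℝ) + 2) * (∑ i, ∑ j, (C i j)^2) + (d:ℝ) * ∑ i, (δE i)^2 := by
            rw [Finset.sum_add_distrib, ← Finset.mul_sum, ← Finset.mul_sum]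
          rw [he1, he2]
          nlinarith [hS, hD, hMsq, hdnn]
      _ = 2 * ((d : ℝ) + 3) * M ^ 2 * ‖w - wbar‖^2 + 2 * d * L := by rw [hwnorm]
  · -- comparison bound
    have htri : ‖w - wbar‖ ≤ ‖w - wstar‖ + ‖wstar - wbar‖ := by
      have h : w - wbar = (w - wstar) + (wstar - wbar) := by abel
      rw [h]
      exact norm_add_le _ _
    have hsq : ‖w - wbar‖^2 ≤ 2 * ‖w - wstar‖^2 + 2 * ‖wstar - wbar‖^2 := by
      have h2 : ‖w - wbar‖^2 ≤ (‖w - wstar‖ + ‖wstar - wbar‖)^2 :=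
        pow_le_pow_left₀ (norm_nonneg _) htri 2
      nlinarith [sq_nonneg (‖w - wstar‖ - ‖wstar - wbar‖)]
    have hc : (0:ℝ) ≤ 2 * ((d : ℝ) + 3) * M ^ 2 := by positivity
    nlinarith [mul_le_mul_of_nonneg_left hsq hc]
end
end

section
/- Let 𝒯^d be the space of d×d lower-triangular real matrices and define h : ℝ^d × 𝒯^d → ℝ ∪ {+∞} by h(m, C) = −log det C if all diagonal entries of C are positive, and +∞ otherwise. Then for every γ > 0 and every (m, C) ∈ ℝ^d × 𝒯^d, prox_{γh}(m, C) = (m, Ĉ), where Ĉ_{ii} = (C_{ii} + √(C_{ii}² + 4γ))/2 for every i and Ĉ_{ij} = C_{ij} for i ≠ j. -/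
open Classical in
/-- The negative entropy on `ℝ^d × 𝒯^d`: `h(m, C) = −log det C` if all diagonal entries
of the lower-triangular matrix `C` are positive, and `+∞` otherwise. -/
noncomputable def negEntropyTri {d : ℕ} (C : Matrix (Fin d) (Fin d) ℝ) : EReal :=
  if ∀ i, 0 < C i i then ((-Real.log C.det : ℝ) : EReal) else ⊤

lemma negEntropyTri_aux {d : ℕ} (M : Matrix (Fin d) (Fin d) ℝ)
    (hlt : ∀ i j : Fin d, i < j → M i j = 0) (hpos : ∀ i, 0 < M i i) :
    negEntropyTri M = ((-(∑ i, Real.log (M i i)) : ℝ) : EReal) := by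
  unfold negEntropyTri
  rw [if_pos hpos]
  have hdet : M.det = ∏ i, M i i :=
    Matrix.det_of_lowerTriangular M (fun i j h => hlt i j (OrderDual.toDual_lt_toDual.mp h))
  rw [hdet, Real.log_prod (fun i _ => (hpos i).ne')]

lemma negEntropyTri_top {d : ℕ} (M : Matrix (Fin d) (Fin d) ℝ)
    (hpos : ¬ ∀ i, 0 < M i i) : negEntropyTri M = ⊤ := by
  unfold negEntropyTri
  rw [if_neg hpos]

lemma scalar_prox (γ c y : ℝ) (hγ : 0 < γ) (hy : 0 < y)
    {x : ℝ} (hx : x = (c + Real.sqrt (c ^ 2 + 4 * γ)) / 2) :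
    -Real.log x + ((c - x) ^ 2 + (y - x) ^ 2) / (2 * γ)
      ≤ -Real.log y + (c - y) ^ 2 / (2 * γ) := by
  have hsnn : 0 ≤ Real.sqrt (c ^ 2 + 4 * γ) := Real.sqrt_nonneg _
  have hs : Real.sqrt (c ^ 2 + 4 * γ) ^ 2 = c ^ 2 + 4 * γ :=
    Real.sq_sqrt (by positivity)
  have habs : |c| < Real.sqrt (c ^ 2 + 4 * γ) := by
    rw [← Real.sqrt_sq_eq_abs]
    exact Real.sqrt_lt_sqrt (sq_nonneg c) (by linarith)
  have hxpos : 0 < x := by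
    have := neg_abs_le c
    rw [hx]; linarith
  have hkey : x ^ 2 = c * x + γ := by rw [hx]; nlinarith [hs]
  have hlog : Real.log y - Real.log x ≤ (y - x) / x := by
    have h1 := Real.log_le_sub_one_of_pos (show (0:ℝ) < y / x by positivity)
    rw [Real.log_div (ne_of_gt hy) (ne_of_gt hxpos)] at h1
    have h2 : y / x - 1 = (y - x) / x := by field_simp
    linarith [h2 ▸ h1]
  have hiden : (c - y) ^ 2 / (2 * γ) - ((c - x) ^ 2 + (y - x) ^ 2) / (2 * γ)
      = (y - x) / x := by
    rw [← sub_div, div_eq_div_iff (by positivity) hxpos.ne']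
    nlinarith [hkey]
  linarith

lemma scalar_prox_pos (γ c : ℝ) (hγ : 0 < γ) :
    0 < (c + Real.sqrt (c ^ 2 + 4 * γ)) / 2 := by
  have habs : |c| < Real.sqrt (c ^ 2 + 4 * γ) := by
    rw [← Real.sqrt_sq_eq_abs]
    exact Real.sqrt_lt_sqrt (sq_nonneg c) (by linarith)
  have := neg_abs_le c
  linarith

lemma strong_ineq {d : ℕ} (γ : ℝ) (hγ : 0 < γ)
    (C Chat C' : Matrix (Fin d) (Fin d) ℝ)
    (hChat : ∀ i j : Fin d,
      Chat i j = if i = j then (C i j + Real.sqrt ((C i j) ^ 2 + 4 * γ)) / 2 else C i j)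
    (hpos' : ∀ i, 0 < C' i i) :
    -(∑ i, Real.log (Chat i i)) + 1/(2*γ) * ∑ i, ∑ j, (C i j - Chat i j)^2
      + 1/(2*γ) * ∑ i, ∑ j, (C' i j - Chat i j)^2
    ≤ -(∑ i, Real.log (C' i i)) + 1/(2*γ) * ∑ i, ∑ j, (C i j - C' i j)^2 := by
  have per : ∀ i ∈ Finset.univ,
      (-Real.log (Chat i i)
        + 1/(2*γ) * ∑ j, ((C i j - Chat i j)^2 + (C' i j - Chat i j)^2))
      ≤ (-Real.log (C' i i) + 1/(2*γ) * ∑ j, (C i j - C' i j)^2) := by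
    intro i _
    have e1 : ∀ j ∈ Finset.univ.erase i,
        (C i j - Chat i j)^2 + (C' i j - Chat i j)^2 = (C i j - C' i j)^2 := by
      intro j hj
      rw [hChat i j, if_neg (Finset.ne_of_mem_erase hj).symm]
      ring
    have hsum1 : ∑ j, ((C i j - Chat i j)^2 + (C' i j - Chat i j)^2)
        = ((C i i - Chat i i)^2 + (C' i i - Chat i i)^2)
          + ∑ j ∈ Finset.univ.erase i, (C i j - C' i j)^2 := by
      rw [← Finset.add_sum_erase _ _ (Finset.mem_univ i)]
      exact congrArg _ (Finset.sum_congr rfl e1)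
    have hsum2 : ∑ j, (C i j - C' i j)^2
        = (C i i - C' i i)^2 + ∑ j ∈ Finset.univ.erase i, (C i j - C' i j)^2 :=
      (Finset.add_sum_erase _ _ (Finset.mem_univ i)).symm
    have hxi : Chat i i = (C i i + Real.sqrt ((C i i) ^ 2 + 4 * γ)) / 2 := by
      rw [hChat i i, if_pos rfl]
    have hsc := scalar_prox γ (C i i) (C' i i) hγ (hpos' i) hxi
    rw [hsum1, hsum2, mul_add, mul_add]
    have c1 : ((C i i - Chat i i)^2 + (C' i i - Chat i i)^2) / (2*γ)
        = 1/(2*γ) * ((C i i - Chat i i)^2 + (C' i i - Chat i i)^2) := by ring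
    have c2 : (C i i - C' i i)^2 / (2*γ) = 1/(2*γ) * (C i i - C' i i)^2 := by ring
    rw [c1, c2] at hsc
    linarith
  have h := Finset.sum_le_sum per
  simp only [Finset.sum_add_distrib, mul_add, Finset.sum_neg_distrib,
    ← Finset.mul_sum] at h
  linarith

/-- **Proximal operator of the negative entropy over lower-triangular factors.**
For `h(m, C) = −log det C` (if `C` has positive diagonal, `+∞` otherwise) on
`ℝ^d × 𝒯^d` with the Euclidean/Frobenius inner products, `prox_{γh}(m, C) = (m, Ĉ)`,
where `Ĉᵢᵢ = (Cᵢᵢ + √(Cᵢᵢ² + 4γ))/2` and `Ĉᵢⱼ = Cᵢⱼ` for `i ≠ j`: the pair `(m, Ĉ)` is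
the unique minimizer of `v ↦ h(v) + (1/(2γ))‖(m, C) − v‖²` over `ℝ^d × 𝒯^d`. -/
theorem prox_negEntropy_lowerTriangular
    (d : ℕ) (γ : ℝ) (hγ : 0 < γ)
    (m : Fin d → ℝ) (C : Matrix (Fin d) (Fin d) ℝ)
    -- `C` is lower triangular
    (hC : ∀ i j : Fin d, i < j → C i j = 0)
    -- `Ĉ`
    (Chat : Matrix (Fin d) (Fin d) ℝ)
    (hChat : ∀ i j : Fin d,
      Chat i j = if i = j then (C i j + Real.sqrt ((C i j) ^ 2 + 4 * γ)) / 2 else C i j) :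
    -- `Ĉ` is lower triangular, i.e. `(m, Ĉ) ∈ ℝ^d × 𝒯^d`
    (∀ i j : Fin d, i < j → Chat i j = 0)
    -- `(m, Ĉ)` minimizes `v ↦ h(v) + (1/(2γ))‖(m, C) − v‖²` over `ℝ^d × 𝒯^d` ...
    ∧ (∀ (m' : Fin d → ℝ) (C' : Matrix (Fin d) (Fin d) ℝ),
        (∀ i j : Fin d, i < j → C' i j = 0) →
        negEntropyTri Chat
            + ((1 / (2 * γ) * ∑ i, ∑ j, (C i j - Chat i j) ^ 2 : ℝ) : EReal)
          ≤ negEntropyTri C'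
            + ((1 / (2 * γ) * ((∑ i, (m i - m' i) ^ 2)
                + ∑ i, ∑ j, (C i j - C' i j) ^ 2) : ℝ) : EReal))
    -- ... and it is the unique such minimizer
    ∧ (∀ (m' : Fin d → ℝ) (C' : Matrix (Fin d) (Fin d) ℝ),
        (∀ i j : Fin d, i < j → C' i j = 0) →
        negEntropyTri C'
            + ((1 / (2 * γ) * ((∑ i, (m i - m' i) ^ 2)
                + ∑ i, ∑ j, (C i j - C' i j) ^ 2) : ℝ) : EReal)
          ≤ negEntropyTri Chat
            + ((1 / (2 * γ) * ∑ i, ∑ j, (C i j - Chat i j) ^ 2 : ℝ) : EReal) →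
        m' = m ∧ C' = Chat) := by
  have hChat_lt : ∀ i j : Fin d, i < j → Chat i j = 0 := by
    intro i j hij
    rw [hChat i j, if_neg hij.ne]
    exact hC i j hij
  have hChat_pos : ∀ i, 0 < Chat i i := by
    intro i
    rw [hChat i i, if_pos rfl]
    exact scalar_prox_pos γ (C i i) hγ
  have hE : negEntropyTri Chat = ((-(∑ i, Real.log (Chat i i)) : ℝ) : EReal) :=
    negEntropyTri_aux Chat hChat_lt hChat_pos
  refine ⟨hChat_lt, ?_, ?_⟩
  · intro m' C' hC'
    by_cases hpos' : ∀ i, 0 < C' i i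
    · rw [hE, negEntropyTri_aux C' hC' hpos', ← EReal.coe_add, ← EReal.coe_add,
        EReal.coe_le_coe_iff]
      have hst := strong_ineq γ hγ C Chat C' hChat hpos'
      have h1 : 0 ≤ 1/(2*γ) * ∑ i, ∑ j, (C' i j - Chat i j)^2 := by positivity
      have h2 : 0 ≤ 1/(2*γ) * ∑ i, (m i - m' i)^2 := by positivity
      rw [mul_add]
      linarith
    · rw [negEntropyTri_top C' hpos', EReal.top_add_of_ne_bot (EReal.coe_ne_bot _)]
      exact le_top
  · intro m' C' hC' hle
    have hpos' : ∀ i, 0 < C' i i := by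
      by_contra hneg
      rw [negEntropyTri_top C' hneg, EReal.top_add_of_ne_bot (EReal.coe_ne_bot _),
        top_le_iff, hE, ← EReal.coe_add] at hle
      exact (EReal.coe_ne_top _) hle
    rw [hE, negEntropyTri_aux C' hC' hpos', ← EReal.coe_add, ← EReal.coe_add,
      EReal.coe_le_coe_iff, mul_add] at hle
    have hst := strong_ineq γ hγ C Chat C' hChat hpos'
    have hM : 0 ≤ ∑ i, (m i - m' i)^2 := by positivity
    have hS : 0 ≤ ∑ i, ∑ j, (C' i j - Chat i j)^2 := by positivity
    have hc : 0 < 1/(2*γ) := by positivity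
    have h1 : 0 ≤ 1/(2*γ) * ∑ i, (m i - m' i)^2 := by positivity
    have h2 : 0 ≤ 1/(2*γ) * ∑ i, ∑ j, (C' i j - Chat i j)^2 := by positivity
    have hMz : 1/(2*γ) * ∑ i, (m i - m' i)^2 = 0 := by linarith
    have hSz : 1/(2*γ) * ∑ i, ∑ j, (C' i j - Chat i j)^2 = 0 := by linarith
    have hM0 : ∑ i, (m i - m' i)^2 = 0 := by
      rcases mul_eq_zero.mp hMz with h | h
      · exact absurd h hc.ne'
      · exact h
    have hS0 : ∑ i, ∑ j, (C' i j - Chat i j)^2 = 0 := by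
      rcases mul_eq_zero.mp hSz with h | h
      · exact absurd h hc.ne'
      · exact h
    constructor
    · funext i
      have := (Finset.sum_eq_zero_iff_of_nonneg
        (fun i _ => sq_nonneg (m i - m' i))).mp hM0 i (Finset.mem_univ i)
      have := pow_eq_zero_iff (n := 2) (by norm_num) |>.mp this
      linarith [sub_eq_zero.mp this]
    · ext i j
      have hrow := (Finset.sum_eq_zero_iff_of_nonneg
        (fun i _ => Finset.sum_nonneg fun j _ => sq_nonneg (C' i j - Chat i j))).mp
        hS0 i (Finset.mem_univ i)
      have hent := (Finset.sum_eq_zero_iff_of_nonneg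
        (fun j _ => sq_nonneg (C' i j - Chat i j))).mp hrow j (Finset.mem_univ j)
      have := pow_eq_zero_iff (n := 2) (by norm_num) |>.mp hent
      exact sub_eq_zero.mp this
end
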